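/- arXiv:1602.05386 — 2 statements merged into one kernel-verified Lean document; each statement's English description precedes it below -/
import Mathlib

section
/- Let k ≥ 3 and n ≥ m ≥ 2 be integers and suppose that R(C^k_n, C^k_m) = (k−1)n + ⌊(m−1)/2⌋. Then R(P^k_n, C^k_m) = (k−1)n + ⌊(m+1)/2⌋ and R(P^k_n, P^k_{m−1}) = (k−1)n + ⌊m/2⌋. Moreover, if n = m then R(P^k_n, P^k_n) = (k−1)n + ⌊(n+1)/2⌋. -/
open Finset

/-- The `i`-th edge (0-indexed) of a `k`-uniform loose path embedded via `f`. -/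
def pathEdge (k : ℕ) {V : Type} [DecidableEq V] (f : ℕ → V) (i : ℕ) : Finset V :=
  (Finset.range k).image fun j => f (i * (k - 1) + j)

/-- The `i`-th edge (0-indexed) of a `k`-uniform loose cycle of length `n` embedded via `f`. -/
def cycleEdge (k n : ℕ) {V : Type} [DecidableEq V] (f : ℕ → V) (i : ℕ) : Finset V :=
  (Finset.range k).image fun j => f ((i * (k - 1) + j) % (n * (k - 1)))

/-- There is a copy of the loose path `P^k_n` all of whose edges have color `b`. -/
def hasPath (k n : ℕ) {V : Type} [DecidableEq V] (col : Finset V → Bool) (b : Bool) : Prop :=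
  ∃ f : ℕ → V, Set.InjOn f (Set.Iio (n * (k - 1) + 1)) ∧
    ∀ i < n, col (pathEdge k f i) = b

/-- There is a copy of the loose cycle `C^k_n` all of whose edges have color `b`. -/
def hasCycle (k n : ℕ) {V : Type} [DecidableEq V] (col : Finset V → Bool) (b : Bool) : Prop :=
  ∃ f : ℕ → V, Set.InjOn f (Set.Iio (n * (k - 1))) ∧
    ∀ i < n, col (cycleEdge k n f i) = b

/-- Ramsey number `R(P^k_n, P^k_m)` (red = `true`, blue = `false`). -/
noncomputable def ramseyPP (k n m : ℕ) : ℕ :=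
  sInf {N | ∀ col : Finset (Fin N) → Bool, hasPath k n col true ∨ hasPath k m col false}

/-- Ramsey number `R(P^k_n, C^k_m)`. -/
noncomputable def ramseyPC (k n m : ℕ) : ℕ :=
  sInf {N | ∀ col : Finset (Fin N) → Bool, hasPath k n col true ∨ hasCycle k m col false}

/-- Ramsey number `R(C^k_n, P^k_m)`. -/
noncomputable def ramseyCP (k n m : ℕ) : ℕ :=
  sInf {N | ∀ col : Finset (Fin N) → Bool, hasCycle k n col true ∨ hasPath k m col false}

/-- Ramsey number `R(C^k_n, C^k_m)`. -/
noncomputable def ramseyCC (k n m : ℕ) : ℕ :=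
  sInf {N | ∀ col : Finset (Fin N) → Bool, hasCycle k n col true ∨ hasCycle k m col false}

lemma sub_one_mul_add (m c : ℕ) (hm : 1 ≤ m) : (m-1)*c + c = m*c := by
  obtain ⟨m', rfl⟩ : ∃ m', m = m'+1 := ⟨m-1, by omega⟩
  simp [Nat.add_mul]

lemma hasPath_push {M N : ℕ} (hMN : M ≤ N) (col : Finset (Fin N) → Bool) (k q : ℕ) (b : Bool)
    (h : hasPath k q (fun s : Finset (Fin M) => col (s.image (Fin.castLE hMN))) b) :
    hasPath k q col b := by
  obtain ⟨f, hinj, hcol⟩ := h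
  refine ⟨fun i => Fin.castLE hMN (f i), ?_, ?_⟩
  · intro a ha b' hb hab
    exact hinj ha hb (Fin.castLE_injective hMN hab)
  · intro i hi
    have he : pathEdge k (fun i => Fin.castLE hMN (f i)) i
        = (pathEdge k f i).image (Fin.castLE hMN) := by
      rw [pathEdge, pathEdge, Finset.image_image]; rfl
    rw [he]; exact hcol i hi

lemma hasCycle_push {M N : ℕ} (hMN : M ≤ N) (col : Finset (Fin N) → Bool) (k q : ℕ) (b : Bool)
    (h : hasCycle k q (fun s : Finset (Fin M) => col (s.image (Fin.castLE hMN))) b) :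
    hasCycle k q col b := by
  obtain ⟨f, hinj, hcol⟩ := h
  refine ⟨fun i => Fin.castLE hMN (f i), ?_, ?_⟩
  · intro a ha b' hb hab
    exact hinj ha hb (Fin.castLE_injective hMN hab)
  · intro i hi
    have he : cycleEdge k q (fun i => Fin.castLE hMN (f i)) i
        = (cycleEdge k q f i).image (Fin.castLE hMN) := by
      rw [cycleEdge, cycleEdge, Finset.image_image]; rfl
    rw [he]; exact hcol i hi

lemma hasPath_of_hasCycle {V : Type} [DecidableEq V] {k m : ℕ} (hk : 2 ≤ k) (hm : 1 ≤ m)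
    {col : Finset V → Bool} {b : Bool} (h : hasCycle k m col b) :
    hasPath k (m - 1) col b := by
  obtain ⟨f, hinj, hcol⟩ := h
  have key : (m-1)*(k-1) + (k-1) = m*(k-1) := sub_one_mul_add m (k-1) hm
  refine ⟨f, ?_, ?_⟩
  · intro a ha b' hb hab
    refine hinj ?_ ?_ hab
    · have : a < (m-1)*(k-1)+1 := ha
      exact Set.mem_Iio.2 (by omega)
    · have : b' < (m-1)*(k-1)+1 := hb
      exact Set.mem_Iio.2 (by omega)
  · intro i hi
    have he : pathEdge k f i = cycleEdge k m f i := by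
      rw [pathEdge, cycleEdge]
      apply Finset.image_congr
      intro j hj
      simp only [Finset.mem_coe, Finset.mem_range] at hj
      have hlt : i * (k-1) + j < m * (k-1) := by
        have h2 : (i+1) * (k-1) ≤ (m-1)*(k-1) := Nat.mul_le_mul_right _ (by omega)
        have h4 : (i+1)*(k-1) = i*(k-1)+(k-1) := by ring
        omega
      simp only [Nat.mod_eq_of_lt hlt]
    rw [he]; exact hcol i (by omega)
/-- Coloring: red (`true`) iff the edge avoids `W`. -/
def colW {x : ℕ} (W : Finset (Fin x)) : Finset (Fin x) → Bool :=
  fun E => decide (∀ v ∈ E, v ∉ W)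

lemma no_red_path {x k n : ℕ} (hk : 3 ≤ k) (hn : 1 ≤ n) (W : Finset (Fin x))
    (hcard : x ≤ n*(k-1) + W.card) : ¬ hasPath k n (colW W) true := by
  rintro ⟨f, hinj, hcol⟩
  -- every vertex of the path avoids W
  have havoid : ∀ p, p < n*(k-1)+1 → f p ∉ W := by
    intro p hp
    by_cases hend : p = n*(k-1)
    · have h0 := hcol (n-1) (by omega)
      have hmem : f p ∈ pathEdge k f (n-1) := by
        rw [pathEdge]
        apply Finset.mem_image.2
        refine ⟨k-1, Finset.mem_range.2 (by omega), ?_⟩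
        congr 1
        have := sub_one_mul_add n (k-1) hn
        omega
      have := of_decide_eq_true h0
      exact this _ hmem
    · set i := p / (k-1) with hi
      have hik : i < n := by
        have hcomm : n*(k-1) = (k-1)*n := Nat.mul_comm _ _
        exact Nat.div_lt_of_lt_mul (by omega)
      have h0 := hcol i hik
      have hmem : f p ∈ pathEdge k f i := by
        rw [pathEdge]
        apply Finset.mem_image.2
        refine ⟨p % (k-1), Finset.mem_range.2 (by
          have : p % (k-1) < k-1 := Nat.mod_lt _ (by omega)
          omega), ?_⟩
        congr 1
        rw [hi]
        exact Nat.div_add_mod' p (k-1)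
      have := of_decide_eq_true h0
      exact this _ hmem
  -- cardinality contradiction
  have hsub : (Finset.range (n*(k-1)+1)).image f ⊆ Finset.univ \ W := by
    intro v hv
    obtain ⟨p, hp, rfl⟩ := Finset.mem_image.1 hv
    simp only [Finset.mem_sdiff, Finset.mem_univ, true_and]
    exact havoid p (Finset.mem_range.1 hp)
  have hc1 : ((Finset.range (n*(k-1)+1)).image f).card = n*(k-1)+1 := by
    rw [Finset.card_image_of_injOn, Finset.card_range]
    intro a ha b hb hab
    exact hinj (Set.mem_Iio.2 (Finset.mem_range.1 ha)) (Set.mem_Iio.2 (Finset.mem_range.1 hb)) hab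
  have hc2 : (Finset.univ \ W).card = x - W.card := by
    rw [Finset.card_sdiff_of_subset (Finset.subset_univ W), Finset.card_univ, Fintype.card_fin]
  have := Finset.card_le_card hsub
  omega

lemma eq_decompose {c i1 j1 i2 j2 : ℕ} (hc : 1 ≤ c) (hj1 : j1 ≤ c) (hj2 : j2 ≤ c)
    (h : i1*c+j1 = i2*c+j2) :
    (i1 = i2 ∧ j1 = j2) ∨ (i1 = i2+1 ∧ j1 = 0 ∧ j2 = c) ∨ (i2 = i1+1 ∧ j2 = 0 ∧ j1 = c) := by
  rcases Nat.lt_trichotomy i1 i2 with hlt | heq | hgt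
  · right; right
    have h1 : (i1+1)*c ≤ i2*c := Nat.mul_le_mul_right _ (by omega)
    have h2 : (i1+2)*c ≤ i2*c ∨ i2 = i1+1 := by
      rcases Nat.lt_or_ge i2 (i1+2) with h' | h'
      · right; omega
      · left; exact Nat.mul_le_mul_right _ h'
    rcases h2 with h2 | h2
    · exfalso
      have e1 : (i1+2)*c = i1*c + 2*c := by ring
      omega
    · subst h2
      have e1 : (i1+1)*c = i1*c + c := by ring
      omega
  · left; constructor
    · exact heq
    · subst heq; omega
  · right; left
    have h1 : (i2+1)*c ≤ i1*c := Nat.mul_le_mul_right _ (by omega)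
    have h2 : (i2+2)*c ≤ i1*c ∨ i1 = i2+1 := by
      rcases Nat.lt_or_ge i1 (i2+2) with h' | h'
      · right; omega
      · left; exact Nat.mul_le_mul_right _ h'
    rcases h2 with h2 | h2
    · exfalso
      have e1 : (i2+2)*c = i2*c + 2*c := by ring
      omega
    · subst h2
      have e1 : (i2+1)*c = i2*c + c := by ring
      omega

/-- among values `i*c+j` (`j ≤ c`) giving the same residue mod `m*c`, at most two distinct `i < m`. -/
lemma three_mod {c m i1 j1 i2 j2 i3 j3 : ℕ} (hc : 2 ≤ c) (hm : 1 ≤ m)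
    (hi1 : i1 < m) (hi2 : i2 < m) (hi3 : i3 < m)
    (hj1 : j1 ≤ c) (hj2 : j2 ≤ c) (hj3 : j3 ≤ c)
    (h12 : (i1*c+j1) % (m*c) = (i2*c+j2) % (m*c))
    (h13 : (i1*c+j1) % (m*c) = (i3*c+j3) % (m*c))
    (hne12 : i1 ≠ i2) (hne13 : i1 ≠ i3) (hne23 : i2 ≠ i3) : False := by
  have hMpos : 0 < m*c := by positivity
  -- values are at most m*c
  have hb : ∀ i j : ℕ, i < m → j ≤ c → i*c+j ≤ m*c := by
    intro i j hi hj
    have h1 : (i+1)*c ≤ m*c := Nat.mul_le_mul_right _ (by omega)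
    have e1 : (i+1)*c = i*c+c := by ring
    omega
  have key : ∀ i j i' j' : ℕ, i < m → i' < m → j ≤ c → j' ≤ c →
      (i*c+j) % (m*c) = (i'*c+j') % (m*c) → i ≠ i' →
      (i = i'+1 ∧ j = 0 ∧ j' = c) ∨ (i' = i+1 ∧ j' = 0 ∧ j = c) ∨
      (i = m-1 ∧ j = c ∧ i' = 0 ∧ j' = 0) ∨ (i' = m-1 ∧ j' = c ∧ i = 0 ∧ j = 0) := by
    intro i j i' j' hi hi' hj hj' hmod hne
    have hv : i*c+j ≤ m*c := hb i j hi hj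
    have hv' : i'*c+j' ≤ m*c := hb i' j' hi' hj'
    rcases Nat.lt_or_ge (i*c+j) (m*c) with h1 | h1
    · rcases Nat.lt_or_ge (i'*c+j') (m*c) with h2 | h2
      · rw [Nat.mod_eq_of_lt h1, Nat.mod_eq_of_lt h2] at hmod
        rcases eq_decompose (by omega) hj hj' hmod with ⟨e,_⟩ | h | h
        · exact absurd e hne
        · left; exact h
        · right; left; exact h
      · -- i'*c+j' = m*c
        have h2' : i'*c+j' = m*c := by omega
        rw [Nat.mod_eq_of_lt h1, h2', Nat.mod_self] at hmod
        have : i*c = 0 ∧ j = 0 := by omega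
        -- i' must be m-1, j' = c
        have hdec : i' = m-1 ∧ j' = c := by
          have h3 : (m-1)*c + c = m*c := sub_one_mul_add m c hm
          rcases eq_decompose (by omega) hj' (le_refl c) (by omega : i'*c+j' = (m-1)*c+c) with
            ⟨e1,e2⟩ | ⟨e1,e2,e3⟩ | ⟨e1,e2,e3⟩
          · exact ⟨e1, e2⟩
          · omega
          · exfalso
            have : (i'+1) ≤ m - 1 := by omega
            have h4 : (i'+1)*c ≤ (m-1)*c := Nat.mul_le_mul_right _ this
            have e4 : (i'+1)*c = i'*c+c := by ring
            omega
        have hi0 : i = 0 := by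
          rcases Nat.eq_zero_or_pos i with h | h
          · exact h
          · exfalso; have : 1*c ≤ i*c := Nat.mul_le_mul_right _ h; omega
        right; right; right
        exact ⟨hdec.1, hdec.2, hi0, this.2⟩
    · have h1' : i*c+j = m*c := by omega
      rcases Nat.lt_or_ge (i'*c+j') (m*c) with h2 | h2
      · rw [Nat.mod_eq_of_lt h2, h1', Nat.mod_self] at hmod
        have : i'*c = 0 ∧ j' = 0 := by omega
        have hdec : i = m-1 ∧ j = c := by
          have h3 : (m-1)*c + c = m*c := sub_one_mul_add m c hm
          rcases eq_decompose (by omega) hj (le_refl c) (by omega : i*c+j = (m-1)*c+c) with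
            ⟨e1,e2⟩ | ⟨e1,e2,e3⟩ | ⟨e1,e2,e3⟩
          · exact ⟨e1, e2⟩
          · omega
          · exfalso
            have : (i+1) ≤ m - 1 := by omega
            have h4 : (i+1)*c ≤ (m-1)*c := Nat.mul_le_mul_right _ this
            have e4 : (i+1)*c = i*c+c := by ring
            omega
        have hi0 : i' = 0 := by
          rcases Nat.eq_zero_or_pos i' with h | h
          · exact h
          · exfalso; have : 1*c ≤ i'*c := Nat.mul_le_mul_right _ h; omega
        right; right; left
        exact ⟨hdec.1, hdec.2, hi0, this.2⟩
      · -- both = m*c : then i = i' since decompose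
        exfalso
        have h2' : i'*c+j' = m*c := by omega
        have h3 : i*c+j = i'*c+j' := by omega
        rcases eq_decompose (by omega) hj hj' h3 with ⟨e,_⟩ | ⟨e1,e2,e3⟩ | ⟨e1,e2,e3⟩
        · exact hne e
        · -- j = 0, i = i'+1, i*c = m*c : i = m, contradiction with i < m
          have : i*c = m*c := by omega
          have : i = m := Nat.eq_of_mul_eq_mul_right (by omega) this
          omega
        · have : i'*c = m*c := by omega
          have : i' = m := Nat.eq_of_mul_eq_mul_right (by omega) this
          omega
  rcases key i1 j1 i2 j2 hi1 hi2 hj1 hj2 h12 hne12 with h | h | h | h <;>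
    rcases key i1 j1 i3 j3 hi1 hi3 hj1 hj3 h13 hne13 with g | g | g | g <;>
      omega
lemma no_blue_cycle {x k m : ℕ} (hk : 3 ≤ k) (hm : 1 ≤ m) (W : Finset (Fin x))
    (hW : 2 * W.card < m) : ¬ hasCycle k m (colW W) false := by
  rintro ⟨f, hinj, hcol⟩
  set c := k - 1 with hc
  have hc2 : 2 ≤ c := by omega
  have hMpos : 0 < m * c := by positivity
  -- choose a W-vertex in each edge
  have hch : ∀ i, i < m → ∃ j, j < k ∧ f ((i*c+j) % (m*c)) ∈ W := by
    intro i hi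
    have h0 := hcol i hi
    rw [colW] at h0
    have h1 := of_decide_eq_false h0
    push_neg at h1
    obtain ⟨v, hv, hvW⟩ := h1
    rw [cycleEdge] at hv
    obtain ⟨j, hj, rfl⟩ := Finset.mem_image.1 hv
    exact ⟨j, Finset.mem_range.1 hj, hvW⟩
  choose jj hjlt hjW using hch
  classical
  set φ : ℕ → Fin x := fun i => if h : i < m then f ((i*c + jj i h) % (m*c)) else f 0 with hφ
  have hmaps : ∀ i ∈ Finset.range m, φ i ∈ W := by
    intro i hi
    have him := Finset.mem_range.1 hi
    simp only [hφ, dif_pos him]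
    exact hjW i him
  have himg : (Finset.range m).image φ ⊆ W := by
    intro v hv; obtain ⟨i, hi, rfl⟩ := Finset.mem_image.1 hv; exact hmaps i hi
  have hfib : ∀ a ∈ (Finset.range m).image φ,
      ((Finset.range m).filter fun i => φ i = a).card ≤ 2 := by
    intro a _
    by_contra hgt
    push_neg at hgt
    obtain ⟨i1, i2, i3, h1, h2, h3, hne12, hne13, hne23⟩ :=
      Finset.two_lt_card_iff.1 hgt
    simp only [Finset.mem_filter, Finset.mem_range] at h1 h2 h3
    obtain ⟨hi1, he1⟩ := h1; obtain ⟨hi2, he2⟩ := h2; obtain ⟨hi3, he3⟩ := h3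
    simp only [hφ, dif_pos hi1] at he1
    simp only [hφ, dif_pos hi2] at he2
    simp only [hφ, dif_pos hi3] at he3
    -- injectivity gives equal residues
    have hr : ∀ i (h : i < m), (i*c + jj i h) % (m*c) < m*c := fun i h => Nat.mod_lt _ hMpos
    have e12 : (i1*c + jj i1 hi1) % (m*c) = (i2*c + jj i2 hi2) % (m*c) :=
      hinj (Set.mem_Iio.2 (hr i1 hi1)) (Set.mem_Iio.2 (hr i2 hi2)) (by rw [he1, he2])
    have e13 : (i1*c + jj i1 hi1) % (m*c) = (i3*c + jj i3 hi3) % (m*c) :=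
      hinj (Set.mem_Iio.2 (hr i1 hi1)) (Set.mem_Iio.2 (hr i3 hi3)) (by rw [he1, he3])
    exact three_mod hc2 hm hi1 hi2 hi3 (by have := hjlt i1 hi1; omega)
      (by have := hjlt i2 hi2; omega) (by have := hjlt i3 hi3; omega) e12 e13 hne12 hne13 hne23
  have hcard := Finset.card_le_mul_card_image (Finset.range m) 2 hfib
  rw [Finset.card_range] at hcard
  have := Finset.card_le_card himg
  omega

lemma no_blue_path {x k q : ℕ} (hk : 3 ≤ k) (hq : 1 ≤ q) (W : Finset (Fin x))
    (hW : 2 * W.card < q) : ¬ hasPath k q (colW W) false := by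
  rintro ⟨f, hinj, hcol⟩
  set c := k - 1 with hc
  have hc2 : 2 ≤ c := by omega
  have hch : ∀ i, i < q → ∃ j, j < k ∧ f (i*c+j) ∈ W := by
    intro i hi
    have h0 := hcol i hi
    rw [colW] at h0
    have h1 := of_decide_eq_false h0
    push_neg at h1
    obtain ⟨v, hv, hvW⟩ := h1
    rw [pathEdge] at hv
    obtain ⟨j, hj, rfl⟩ := Finset.mem_image.1 hv
    exact ⟨j, Finset.mem_range.1 hj, hvW⟩
  choose jj hjlt hjW using hch
  classical
  set φ : ℕ → Fin x := fun i => if h : i < q then f (i*c + jj i h) else f 0 with hφ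
  have hmaps : ∀ i ∈ Finset.range q, φ i ∈ W := by
    intro i hi
    have him := Finset.mem_range.1 hi
    simp only [hφ, dif_pos him]
    exact hjW i him
  have himg : (Finset.range q).image φ ⊆ W := by
    intro v hv; obtain ⟨i, hi, rfl⟩ := Finset.mem_image.1 hv; exact hmaps i hi
  have hfib : ∀ a ∈ (Finset.range q).image φ,
      ((Finset.range q).filter fun i => φ i = a).card ≤ 2 := by
    intro a _
    by_contra hgt
    push_neg at hgt
    obtain ⟨i1, i2, i3, h1, h2, h3, hne12, hne13, hne23⟩ :=
      Finset.two_lt_card_iff.1 hgt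
    simp only [Finset.mem_filter, Finset.mem_range] at h1 h2 h3
    obtain ⟨hi1, he1⟩ := h1; obtain ⟨hi2, he2⟩ := h2; obtain ⟨hi3, he3⟩ := h3
    simp only [hφ, dif_pos hi1] at he1
    simp only [hφ, dif_pos hi2] at he2
    simp only [hφ, dif_pos hi3] at he3
    have hr : ∀ i (h : i < q), i*c + jj i h < q*c + 1 := by
      intro i h
      have h1 : (i+1)*c ≤ q*c := Nat.mul_le_mul_right _ (by omega)
      have e1 : (i+1)*c = i*c+c := by ring
      have := hjlt i h
      omega
    have e12 : i1*c + jj i1 hi1 = i2*c + jj i2 hi2 :=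
      hinj (Set.mem_Iio.2 (hr i1 hi1)) (Set.mem_Iio.2 (hr i2 hi2)) (by rw [he1, he2])
    have e13 : i1*c + jj i1 hi1 = i3*c + jj i3 hi3 :=
      hinj (Set.mem_Iio.2 (hr i1 hi1)) (Set.mem_Iio.2 (hr i3 hi3)) (by rw [he1, he3])
    have d12 := eq_decompose (by omega) (by have := hjlt i1 hi1; omega : jj i1 hi1 ≤ c)
      (by have := hjlt i2 hi2; omega : jj i2 hi2 ≤ c) e12
    have d13 := eq_decompose (by omega) (by have := hjlt i1 hi1; omega : jj i1 hi1 ≤ c)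
      (by have := hjlt i3 hi3; omega : jj i3 hi3 ≤ c) e13
    rcases d12 with ⟨e,_⟩ | h | h <;> rcases d13 with ⟨e',_⟩ | h' | h' <;> omega
  have hcard := Finset.card_le_mul_card_image (Finset.range q) 2 hfib
  rw [Finset.card_range] at hcard
  have := Finset.card_le_card himg
  omega
section FB
variable {N k n : ℕ} {col : Finset (Fin N) → Bool} {g : ℕ → Fin N}

lemma forced_blue_1 (hk : 3 ≤ k) (hn : 1 ≤ n)
    (hinj : Set.InjOn g (Set.Iio (n*(k-1))))
    (hred : ∀ i < n, col (cycleEdge k n g i) = true)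
    (hnop : ¬ hasPath k n col true)
    (s : ℕ) (hs : s < n) (T : Finset (Fin N)) (hT : T.card = k-1)
    (hTmem : ∀ x ∈ T, (∃ l, 1 ≤ l ∧ l ≤ k-2 ∧ x = g (s*(k-1)+l)) ∨ (∀ p < n*(k-1), g p ≠ x)) :
    col (insert (g (s*(k-1))) T) = false := by
  classical
  set c := k - 1 with hcdef
  set M := n * c with hMdef
  have hc2 : 2 ≤ c := by omega
  have hcM : (n-1)*c + c = M := sub_one_mul_add n c hn
  have hMpos : 0 < M := by omega
  have hsc : s*c ≤ (n-1)*c := Nat.mul_le_mul_right _ (by omega)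
  have hscM : s*c < M := by omega
  by_contra hcolE
  have hcolE' : col (insert (g (s*c)) T) = true := by
    cases h : col (insert (g (s*c)) T)
    · exact absurd h hcolE
    · rfl
  -- enumeration of T
  have hT' : 0 < k - 1 := by omega
  set σ := T.orderIsoOfFin hT with hσ
  set τ : ℕ → Fin N := fun l => if h : l < k-1 then (σ ⟨l, h⟩ : Fin N) else g 0 with hτ
  have hτT : ∀ l, l < k-1 → τ l ∈ T := by
    intro l hl; simp only [hτ, dif_pos hl]; exact (σ ⟨l, hl⟩).2
  have hτinj : ∀ l1 l2, l1 < k-1 → l2 < k-1 → τ l1 = τ l2 → l1 = l2 := by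
    intro l1 l2 h1 h2 he
    simp only [hτ, dif_pos h1, dif_pos h2] at he
    have h3 := σ.injective (Subtype.ext he)
    exact congrArg Fin.val h3
  have hτsurj : ∀ x ∈ T, ∃ l, l < k-1 ∧ τ l = x := by
    intro x hx
    obtain ⟨l, hl⟩ := σ.surjective ⟨x, hx⟩
    exact ⟨l.1, l.2, by simp only [hτ, dif_pos l.2, hl]; exact dif_pos l.2⟩
  -- the path
  set f : ℕ → Fin N := fun p => if p ≤ (n-1)*c then g (((s+1)*c + p) % M) else τ (p - ((n-1)*c + 1))
    with hf
  have hfg : ∀ p, p ≤ (n-1)*c → f p = g (((s+1)*c + p) % M) := by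
    intro p hp; simp only [hf, if_pos hp]
  have hfτ : ∀ p, (n-1)*c < p → f p = τ (p - ((n-1)*c + 1)) := by
    intro p hp; simp only [hf, if_neg (by omega : ¬ p ≤ (n-1)*c)]
  have hw0 : f ((n-1)*c) = g (s*c) := by
    rw [hfg _ le_rfl]
    congr 1
    have e : (s+1)*c + (n-1)*c = s*c + M := by rw [← hcM]; ring
    rw [e, Nat.add_mod_right, Nat.mod_eq_of_lt hscM]
  -- apply hnop
  apply hnop
  refine ⟨f, ?_, ?_⟩
  · -- injectivity
    intro p1 hp1 p2 hp2 heq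
    simp only [Set.mem_Iio] at hp1 hp2
    simp only [← hcdef] at hp1 hp2
    have hext : ∀ q1 q2 : ℕ, q1 ≤ (n-1)*c → (n-1)*c < q2 → q2 < n*c+1 → f q1 ≠ f q2 := by
      intro q1 q2 hq1 hq2 hq2' habs
      rw [hfg _ hq1, hfτ _ hq2] at habs
      have hl : q2 - ((n-1)*c+1) < k-1 := by omega
      have hxT : τ (q2 - ((n-1)*c+1)) ∈ T := hτT _ hl
      have harg : ((s+1)*c + q1) % M < M := Nat.mod_lt _ hMpos
      rcases hTmem _ hxT with ⟨l, hl1, hl2, hx⟩ | hng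
      · rw [hx] at habs
        have hlM : s*c + l < M := by omega
        have hres : ((s+1)*c + q1) % M = s*c + l :=
          hinj (Set.mem_Iio.2 harg) (Set.mem_Iio.2 hlM) habs
        -- contradiction by arithmetic
        have e1 : (s+1)*c = s*c + c := by ring
        have hA2M : (s+1)*c + q1 < 2*M := by omega
        rcases Nat.lt_or_ge ((s+1)*c + q1) M with hA | hA
        · rw [Nat.mod_eq_of_lt hA] at hres; omega
        · have : ((s+1)*c + q1) % M = (s+1)*c + q1 - M := by
            rw [Nat.mod_eq_sub_mod hA, Nat.mod_eq_of_lt (by omega)]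
          omega
      · exact hng _ harg habs
    rcases le_or_gt p1 ((n-1)*c) with h1 | h1 <;> rcases le_or_gt p2 ((n-1)*c) with h2 | h2
    · rw [hfg _ h1, hfg _ h2] at heq
      have harg1 : ((s+1)*c + p1) % M < M := Nat.mod_lt _ hMpos
      have harg2 : ((s+1)*c + p2) % M < M := Nat.mod_lt _ hMpos
      have hres := hinj (Set.mem_Iio.2 harg1) (Set.mem_Iio.2 harg2) heq
      have hmeq : ((s+1)*c + p1) ≡ ((s+1)*c + p2) [MOD M] := hres
      have hmeq2 : p1 ≡ p2 [MOD M] := Nat.ModEq.add_left_cancel' _ hmeq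
      have : p1 % M = p2 % M := hmeq2
      rw [Nat.mod_eq_of_lt (by omega), Nat.mod_eq_of_lt (by omega)] at this
      exact this
    · exact absurd heq (hext p1 p2 h1 h2 hp2)
    · exact absurd heq.symm (hext p2 p1 h2 h1 hp1)
    · rw [hfτ _ h1, hfτ _ h2] at heq
      have := hτinj _ _ (by omega) (by omega) heq
      omega
  · -- edges
    intro i hi
    rcases Nat.lt_or_ge i (n-1) with hi' | hi'
    · -- a cycle edge
      have he : pathEdge k f i = cycleEdge k n g ((s+1+i) % n) := by
        rw [pathEdge, cycleEdge]
        apply Finset.image_congr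
        intro j hj
        simp only [Finset.mem_coe, Finset.mem_range] at hj
        have hb : i*c + j ≤ (n-1)*c := by
          have h1 : (i+1)*c ≤ (n-1)*c := Nat.mul_le_mul_right _ (by omega)
          have e1 : (i+1)*c = i*c + c := by ring
          omega
        show f (i*c + j) = g ((((s+1+i) % n)*c + j) % M)
        rw [hfg _ hb]
        congr 1
        have e2 : (s+1)*c + (i*c + j) = (s+1+i)*c + j := by ring
        rw [e2]
        -- reduce the outer index mod n
        have e3 : (s+1+i)*c + j = ((s+1+i) % n)*c + j + ((s+1+i)/n)*M := by
          conv_lhs => rw [show s+1+i = n*((s+1+i)/n) + (s+1+i) % n from (Nat.div_add_mod _ n).symm]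
          rw [hMdef]; ring
        rw [e3, Nat.add_mul_mod_self_right]
      rw [he]
      exact hred _ (Nat.mod_lt _ (by omega))
    · -- the last edge is the special edge
      have hieq : i = n-1 := by omega
      subst hieq
      have he : pathEdge k f (n-1) = insert (g (s*c)) T := by
        rw [pathEdge]
        ext v
        simp only [Finset.mem_image, Finset.mem_range, Finset.mem_insert]
        simp only [← hcdef]
        constructor
        · rintro ⟨j, hj, rfl⟩
          rcases Nat.eq_zero_or_pos j with hj0 | hj0
          · left; rw [hj0, Nat.add_zero]; exact hw0
          · right
            have hp : (n-1)*c < (n-1)*c + j := by omega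
            rw [hfτ _ hp]
            have : (n-1)*c + j - ((n-1)*c+1) = j - 1 := by omega
            rw [this]
            exact hτT _ (by omega)
        · rintro (rfl | hvT)
          · exact ⟨0, by omega, hw0⟩
          · obtain ⟨l, hl, hτl⟩ := hτsurj _ hvT
            refine ⟨l+1, by omega, ?_⟩
            rw [hfτ _ (by omega)]
            have : (n-1)*c + (l+1) - ((n-1)*c+1) = l := by omega
            rw [this]
            exact hτl
      rw [he]
      exact hcolE'

end FB
section FB2
variable {N k n : ℕ} {col : Finset (Fin N) → Bool} {g : ℕ → Fin N}

lemma forced_blue_2 (hk : 3 ≤ k) (hn : 1 ≤ n)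
    (hinj : Set.InjOn g (Set.Iio (n*(k-1))))
    (hred : ∀ i < n, col (cycleEdge k n g i) = true)
    (hnop : ¬ hasPath k n col true)
    (s : ℕ) (hs : s < n) (T : Finset (Fin N)) (hT : T.card = k-1)
    (hTmem : ∀ x ∈ T, (∃ l, 1 ≤ l ∧ l ≤ k-2 ∧ x = g (s*(k-1)+l)) ∨ (∀ p < n*(k-1), g p ≠ x)) :
    col (insert (g (((s+1)*(k-1)) % (n*(k-1)))) T) = false := by
  classical
  set c := k - 1 with hcdef
  set M := n * c with hMdef
  have hc2 : 2 ≤ c := by omega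
  have hcM : (n-1)*c + c = M := sub_one_mul_add n c hn
  have hMpos : 0 < M := by omega
  set grev : ℕ → Fin N := fun p => g ((M - p % M) % M) with hgrev
  have hgr : ∀ p, p < M → grev p = g ((M - p) % M) := by
    intro p hp; simp only [hgrev, Nat.mod_eq_of_lt hp]
  have harglt : ∀ p, (M - p) % M < M := fun p => Nat.mod_lt _ hMpos
  -- injectivity of grev
  have hinj' : Set.InjOn grev (Set.Iio M) := by
    intro p1 hp1 p2 hp2 he
    simp only [Set.mem_Iio] at hp1 hp2
    rw [hgr _ hp1, hgr _ hp2] at he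
    have h2 := hinj (Set.mem_Iio.2 (harglt p1)) (Set.mem_Iio.2 (harglt p2)) he
    rcases Nat.eq_zero_or_pos p1 with h01 | h01 <;> rcases Nat.eq_zero_or_pos p2 with h02 | h02
    · omega
    · exfalso
      rw [h01] at h2
      rw [Nat.sub_zero, Nat.mod_self, Nat.mod_eq_of_lt (by omega)] at h2
      omega
    · exfalso
      rw [h02] at h2
      rw [Nat.sub_zero, Nat.mod_self, Nat.mod_eq_of_lt (by omega)] at h2
      omega
    · rw [Nat.mod_eq_of_lt (by omega), Nat.mod_eq_of_lt (by omega)] at h2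
      omega
  -- reversed edges
  have hedge : ∀ i, i < n → cycleEdge k n grev i = cycleEdge k n g (n-1-i) := by
    intro i hi
    obtain ⟨d, hd⟩ : ∃ d, n = i + 1 + d := ⟨n - i - 1, by omega⟩
    have hd' : n - 1 - i = d := by omega
    have hMid : M = i*c + c + d*c := by rw [hMdef, hd]; ring
    have key : ∀ j, j < k → grev ((i*c+j) % M) = g ((d*c + (c-j)) % M) := by
      intro j hj
      have hjc : j ≤ c := by omega
      have hb : i*c + j ≤ M := by omega
      rcases Nat.lt_or_ge (i*c+j) M with hlt | hge
      · rw [Nat.mod_eq_of_lt hlt]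
        rw [hgr _ hlt]
        congr 1
        rcases Nat.eq_zero_or_pos (i*c+j) with h0 | h0
        · have hi0 : i*c = 0 ∧ j = 0 := by omega
          rw [h0, Nat.sub_zero, Nat.mod_self]
          have : d*c + (c - 0) = M := by omega
          rw [hi0.2] at *
          rw [this, Nat.mod_self]
        · have h1 : M - (i*c+j) = d*c + (c - j) := by omega
          rw [h1]
      · have heq : i*c + j = M := by omega
        rw [heq, Nat.mod_self]
        have hj0 : j = c := by
          rcases Nat.lt_or_ge j c with h' | h'
          · exfalso; omega
          · omega
        simp only [hgrev, Nat.zero_mod, Nat.sub_zero, Nat.mod_self]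
        rw [hj0]
        have : d*c + (c - c) = d*c := by omega
        rw [this, Nat.mod_eq_of_lt (by omega)]
        congr 1
        omega
    have hdkc : d*(k-1) = d*c := rfl
    rw [cycleEdge, cycleEdge]
    ext v
    simp only [Finset.mem_image, Finset.mem_range, hd']
    constructor
    · rintro ⟨j, hj, rfl⟩
      refine ⟨k-1-j, by omega, ?_⟩
      rw [show (d * (k-1) + (k-1-j)) = d*c + (c - j) from by omega]
      exact (key j hj).symm
    · rintro ⟨j', hj', rfl⟩
      refine ⟨k-1-j', by omega, ?_⟩
      rw [key (k-1-j') (by omega)]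
      congr 2
      omega
  have hred' : ∀ i, i < n → col (cycleEdge k n grev i) = true := by
    intro i hi
    rw [hedge i hi]
    exact hred _ (by omega)
  -- T membership for grev
  obtain ⟨d, hd⟩ : ∃ d, n = s + 1 + d := ⟨n - s - 1, by omega⟩
  have hMsd : M = s*c + c + d*c := by rw [hMdef, hd]; ring
  have hTmem' : ∀ x ∈ T, (∃ l, 1 ≤ l ∧ l ≤ k-2 ∧ x = grev ((n-1-s)*(k-1)+l)) ∨
      (∀ p < n*(k-1), grev p ≠ x) := by
    intro x hx
    rcases hTmem x hx with ⟨l, hl1, hl2, hxe⟩ | hng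
    · left
      refine ⟨c - l, by omega, by omega, ?_⟩
      have hds : n - 1 - s = d := by omega
      rw [hds]
      have harg : d*(k-1) + (c - l) < M := by
        have : d*(k-1) = d*c := rfl
        omega
      rw [hgr _ harg]
      rw [hxe]
      congr 1
      have h1 : d*(k-1) = d*c := rfl
      have h2 : M - (d*c + (c-l)) = s*c + l := by omega
      rw [show M - (d*(k-1) + (c-l)) = s*c + l from by omega]
      rw [Nat.mod_eq_of_lt (by omega)]
    · right
      intro p hp
      simp only [hgrev]
      exact hng _ (by exact Nat.mod_lt _ hMpos)
  have hres := forced_blue_1 hk hn hinj' hred' hnop (n-1-s) (by omega) T hT hTmem'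
  -- identify the connector
  have hconn : grev ((n-1-s)*(k-1)) = g (((s+1)*(k-1)) % (n*(k-1))) := by
    have hds : n - 1 - s = d := by omega
    rw [hds]
    have hdc : d*(k-1) = d*c := rfl
    have hdlt : d*c < M := by omega
    rcases Nat.eq_zero_or_pos (d*c) with h0 | h0
    · rw [hdc, h0]
      simp only [hgrev, Nat.zero_mod, Nat.sub_zero, Nat.mod_self]
      congr 1
      have : (s+1)*(k-1) = M := by
        have e1 : (s+1)*c = s*c + c := by ring
        have : (s+1)*(k-1) = (s+1)*c := rfl
        omega
      rw [this, Nat.mod_self]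
    · rw [hgr _ (by omega : d*(k-1) < M)]
      congr 1
      have e1 : (s+1)*c = s*c + c := by ring
      have e2 : (s+1)*(k-1) = (s+1)*c := rfl
      have h1 : M - d*(k-1) = (s+1)*c := by omega
      rw [h1]
  rw [hconn] at hres
  exact hres

end FB2
section Constructions
variable {N k n : ℕ} {col : Finset (Fin N) → Bool} {g : ℕ → Fin N}

/-- enumeration of vertices outside the cycle -/
lemma exists_outside (hk : 3 ≤ k) (hn : 1 ≤ n) (t : ℕ)
    (hinj : Set.InjOn g (Set.Iio (n*(k-1))))
    (hN : n*(k-1) + t ≤ N) :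
    ∃ u : ℕ → Fin N, (∀ l, l < t → ∀ p, p < n*(k-1) → g p ≠ u l) ∧
      (∀ l1 l2, l1 < t → l2 < t → u l1 = u l2 → l1 = l2) := by
  classical
  have himg : ((Finset.range (n*(k-1))).image g).card = n*(k-1) := by
    rw [Finset.card_image_of_injOn, Finset.card_range]
    intro a ha b hb hab
    exact hinj (Set.mem_Iio.2 (Finset.mem_range.1 ha)) (Set.mem_Iio.2 (Finset.mem_range.1 hb)) hab
  have hNpos : 0 < N := by
    have h9 : 1*1 ≤ n*(k-1) := Nat.mul_le_mul (by omega) (by omega)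
    omega
  have : Nonempty (Fin N) := ⟨⟨0, hNpos⟩⟩
  have hUcard : t ≤ (Finset.univ \ (Finset.range (n*(k-1))).image g).card := by
    rw [Finset.card_sdiff_of_subset (Finset.subset_univ _), Finset.card_univ, Fintype.card_fin, himg]
    omega
  obtain ⟨W, hWU, hWcard⟩ := Finset.exists_subset_card_eq hUcard
  set σ := W.orderIsoOfFin hWcard with hσ
  refine ⟨fun l => if h : l < t then (σ ⟨l, h⟩ : Fin N) else Classical.arbitrary _, ?_, ?_⟩
  · intro l hl p hp hgp
    have hmem : ((σ ⟨l, hl⟩ : W) : Fin N) ∈ Finset.univ \ (Finset.range (n*(k-1))).image g :=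
      hWU (σ ⟨l, hl⟩).2
    simp only [Finset.mem_sdiff, Finset.mem_univ, true_and, Finset.mem_image] at hmem
    simp only [dif_pos hl] at hgp
    exact hmem ⟨p, Finset.mem_range.2 hp, hgp⟩
  · intro l1 l2 h1 h2 he
    simp only [dif_pos h1, dif_pos h2] at he
    exact congrArg Fin.val (σ.injective (Subtype.ext he))

lemma blue_path_of_red_cycle (hk : 3 ≤ k) {q : ℕ} (hq1 : 1 ≤ q) (hqn : q ≤ n)
    (hinj : Set.InjOn g (Set.Iio (n*(k-1))))
    (hred : ∀ i < n, col (cycleEdge k n g i) = true)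
    (hnop : ¬ hasPath k n col true)
    (hN : n*(k-1) + (q+1)/2 ≤ N) :
    hasPath k q col false := by
  classical
  have hn : 1 ≤ n := le_trans hq1 hqn
  have hc2 : 2 ≤ k - 1 := by omega
  obtain ⟨u, hug, huinj⟩ := exists_outside hk hn ((q+1)/2) hinj hN
  set t := (q+1)/2 with ht
  -- the blue path
  set f : ℕ → Fin N := fun p =>
    if p % (k-1) = 0 ∧ (p/(k-1)) % 2 = 1 then u ((p/(k-1) - 1)/2)
    else if p = q*(k-1) ∧ q % 2 = 0 then g ((q-1)*(k-1))
    else g p with hf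
  have hqcM : q*(k-1) ≤ n*(k-1) := Nat.mul_le_mul_right _ hqn
  have hmul : ∀ j : ℕ, (j*(k-1)) / (k-1) = j := fun j => Nat.mul_div_cancel _ (by omega)
  have hmod : ∀ j : ℕ, (j*(k-1)) % (k-1) = 0 := fun j => Nat.mul_mod_left _ _
  have hstep : ∀ j : ℕ, (j+1)*(k-1) = j*(k-1) + (k-1) := fun j => by ring
  have hsub1 : (q-1)*(k-1) + (k-1) = q*(k-1) := sub_one_mul_add q (k-1) hq1
  -- evaluations
  have hfu : ∀ j, j % 2 = 1 → f (j*(k-1)) = u ((j-1)/2) := by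
    intro j hj
    have h1 : (j*(k-1)) % (k-1) = 0 ∧ ((j*(k-1))/(k-1)) % 2 = 1 := by
      rw [hmul, hmod]; exact ⟨rfl, hj⟩
    simp only [hf, if_pos h1, hmul]
  have hfw : ∀ j, j % 2 = 0 → j < q → f (j*(k-1)) = g (j*(k-1)) := by
    intro j hj hjq
    have hne : ¬ ((j*(k-1)) % (k-1) = 0 ∧ ((j*(k-1))/(k-1)) % 2 = 1) := by
      rw [hmul, hmod]; omega
    have hne2 : ¬ (j*(k-1) = q*(k-1) ∧ q % 2 = 0) := by
      intro ⟨h1, _⟩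
      have := Nat.eq_of_mul_eq_mul_right (by omega : 0 < k-1) h1
      omega
    simp only [hf, if_neg hne, if_neg hne2]
  have hfspec : q % 2 = 0 → f (q*(k-1)) = g ((q-1)*(k-1)) := by
    intro hq
    have hne : ¬ ((q*(k-1)) % (k-1) = 0 ∧ ((q*(k-1))/(k-1)) % 2 = 1) := by
      rw [hmul, hmod]; omega
    simp only [hf, if_neg hne]
    simp [hq]
  have hfint : ∀ p, p % (k-1) ≠ 0 → f p = g p := by
    intro p hp
    have hne2 : ¬ (p = q*(k-1) ∧ q % 2 = 0) := by
      intro ⟨h1, _⟩; rw [h1] at hp; exact hp (hmod q)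
    simp only [hf, if_neg (by tauto : ¬ ((p % (k-1) = 0) ∧ (p/(k-1)) % 2 = 1)), if_neg hne2]
  have huidx : ∀ j, j ≤ q → j % 2 = 1 → (j-1)/2 < t := by intro j h1 h2; omega
  -- branch classification
  have hclass : ∀ p, p ≤ q*(k-1) →
      (∃ j, j ≤ q ∧ j % 2 = 1 ∧ p = j*(k-1) ∧ f p = u ((j-1)/2)) ∨
      (∃ i, i < n*(k-1) ∧ f p = g i ∧ ((p = q*(k-1) ∧ q % 2 = 0 ∧ i = (q-1)*(k-1)) ∨
        (p < q*(k-1) ∧ i = p ∧ ¬ (p % (k-1) = 0 ∧ (p/(k-1)) % 2 = 1)))) := by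
    intro p hp
    by_cases h1 : p % (k-1) = 0 ∧ (p/(k-1)) % 2 = 1
    · left
      obtain ⟨h1a, h1b⟩ := h1
      have hpe : p = (p/(k-1))*(k-1) := (Nat.div_mul_cancel (Nat.dvd_of_mod_eq_zero h1a)).symm
      refine ⟨p/(k-1), ?_, h1b, hpe, ?_⟩
      · have h3 := Nat.div_le_div_right (c := k-1) hp
        rw [hmul] at h3; exact h3
      · conv_lhs => rw [hpe]
        rw [hfu _ h1b]
    · right
      by_cases h2 : p = q*(k-1) ∧ q % 2 = 0
      · refine ⟨(q-1)*(k-1), by omega, ?_, Or.inl ⟨h2.1, h2.2, rfl⟩⟩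
        rw [h2.1, hfspec h2.2]
      · have hplt : p < q*(k-1) := by
          rcases Nat.lt_or_ge p (q*(k-1)) with h | h
          · exact h
          · exfalso
            have hpe : p = q*(k-1) := by omega
            rcases Nat.even_or_odd q with hqe | hqo
            · exact h2 ⟨hpe, Nat.even_iff.1 hqe⟩
            · apply h1
              rw [hpe, hmul, hmod]
              exact ⟨rfl, Nat.odd_iff.1 hqo⟩
        refine ⟨p, by omega, ?_, Or.inr ⟨hplt, rfl, h1⟩⟩
        simp only [hf, if_neg h1, if_neg h2]
  -- injectivity
  have hfinj : ∀ p1 p2, p1 < q*(k-1)+1 → p2 < q*(k-1)+1 → f p1 = f p2 → p1 = p2 := by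
    intro p1 p2 hp1 hp2 heq
    rcases hclass p1 (by omega) with ⟨j1, hj1, ho1, he1, hv1⟩ | ⟨i1, hi1, hv1, hc1⟩ <;>
      rcases hclass p2 (by omega) with ⟨j2, hj2, ho2, he2, hv2⟩ | ⟨i2, hi2, hv2, hc2⟩
    · rw [hv1, hv2] at heq
      have h5 := huinj _ _ (huidx _ hj1 ho1) (huidx _ hj2 ho2) heq
      have : j1 = j2 := by omega
      rw [he1, he2, this]
    · exfalso
      rw [hv1, hv2] at heq
      exact hug _ (huidx _ hj1 ho1) _ hi2 heq.symm
    · exfalso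
      rw [hv1, hv2] at heq
      exact hug _ (huidx _ hj2 ho2) _ hi1 heq
    · rw [hv1, hv2] at heq
      have hieq : i1 = i2 := hinj (Set.mem_Iio.2 hi1) (Set.mem_Iio.2 hi2) heq
      rcases hc1 with ⟨hpa, hqe, hia⟩ | ⟨hpa, hia, hno⟩ <;>
        rcases hc2 with ⟨hpb, hqb, hib⟩ | ⟨hpb, hib, hnob⟩
      · omega
      · exfalso
        apply hnob
        have hp2e : p2 = (q-1)*(k-1) := by omega
        rw [hp2e, hmul, hmod]
        exact ⟨rfl, by omega⟩
      · exfalso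
        apply hno
        have hp1e : p1 = (q-1)*(k-1) := by omega
        rw [hp1e, hmul, hmod]
        exact ⟨rfl, by omega⟩
      · omega
  -- edge positions bound
  have hposbd : ∀ j l, j < q → l < k → j*(k-1) + l < q*(k-1)+1 := by
    intro j l hjq hlk
    have h1 : (j+1)*(k-1) ≤ q*(k-1) := Nat.mul_le_mul_right _ (by omega)
    have := hstep j
    omega
  refine ⟨f, ?_, ?_⟩
  · intro p1 hp1 p2 hp2 heq
    exact hfinj p1 p2 hp1 hp2 heq
  · intro j hj
    have hEcard : (pathEdge k f j).card = k := by
      rw [pathEdge, Finset.card_image_of_injOn, Finset.card_range]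
      intro l1 hl1 l2 hl2 he
      simp only [Finset.coe_range, Set.mem_Iio] at hl1 hl2
      have := hfinj _ _ (hposbd j l1 hj hl1) (hposbd j l2 hj hl2) he
      omega
    -- generic middle membership
    have hmid : ∀ l, 1 ≤ l → l ≤ k-2 → f (j*(k-1)+l) = g (j*(k-1)+l) := by
      intro l h1 h2
      apply hfint
      have he : (j*(k-1)+l) % (k-1) = l := by
        rw [Nat.add_comm, Nat.add_mul_mod_self_right, Nat.mod_eq_of_lt (by omega)]
      omega
    rcases Nat.even_or_odd j with hje | hjo
    · -- j even : FB1 with w = g (j*(k-1)) at position 0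
      have hje' : j % 2 = 0 := Nat.even_iff.1 hje
      have hwE : g (j*(k-1)) ∈ pathEdge k f j := by
        rw [pathEdge]
        refine Finset.mem_image.2 ⟨0, Finset.mem_range.2 (by omega), ?_⟩
        rw [Nat.add_zero]
        exact hfw j hje' hj
      have hTcard : ((pathEdge k f j).erase (g (j*(k-1)))).card = k - 1 := by
        rw [Finset.card_erase_of_mem hwE, hEcard]
      have hTmem : ∀ x ∈ (pathEdge k f j).erase (g (j*(k-1))),
          (∃ l, 1 ≤ l ∧ l ≤ k-2 ∧ x = g (j*(k-1)+l)) ∨ (∀ p < n*(k-1), g p ≠ x) := by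
        intro x hx
        have hxw := Finset.ne_of_mem_erase hx
        have hxE := Finset.mem_of_mem_erase hx
        rw [pathEdge] at hxE
        obtain ⟨l, hl, hfl⟩ := Finset.mem_image.1 hxE
        rw [Finset.mem_range] at hl
        rcases Nat.eq_zero_or_pos l with hl0 | hl0
        · exfalso
          apply hxw
          rw [← hfl, hl0, Nat.add_zero]
          exact (hfw j hje' hj).symm ▸ rfl
        · rcases Nat.lt_or_ge l (k-1) with hlc | hlc
          · left
            exact ⟨l, by omega, by omega, by rw [← hfl, hmid l (by omega) (by omega)]⟩
          · -- l = k-1 : connector u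
            have hle : l = k-1 := by omega
            right
            intro p hp habs
            have : f (j*(k-1)+l) = u ((j+1-1)/2) := by
              rw [hle, ← hstep j]
              exact hfu (j+1) (by omega)
            rw [this] at hfl
            rw [← hfl] at habs
            exact hug _ (by omega : (j+1-1)/2 < t) _ hp habs
      have hres := forced_blue_1 hk hn hinj hred hnop j (by omega) _ hTcard hTmem
      rwa [Finset.insert_erase hwE] at hres
    · -- j odd
      have hjo' : j % 2 = 1 := Nat.odd_iff.1 hjo
      rcases Nat.lt_or_ge (j+1) q with hjq | hjq
      · -- FB2 with w = g ((j+1)*(k-1)) at position k-1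
        have hwE : g ((j+1)*(k-1)) ∈ pathEdge k f j := by
          rw [pathEdge]
          refine Finset.mem_image.2 ⟨k-1, Finset.mem_range.2 (by omega), ?_⟩
          rw [← hstep j]
          exact hfw (j+1) (by omega) hjq
        have hTcard : ((pathEdge k f j).erase (g ((j+1)*(k-1)))).card = k - 1 := by
          rw [Finset.card_erase_of_mem hwE, hEcard]
        have hTmem : ∀ x ∈ (pathEdge k f j).erase (g ((j+1)*(k-1))),
            (∃ l, 1 ≤ l ∧ l ≤ k-2 ∧ x = g (j*(k-1)+l)) ∨ (∀ p < n*(k-1), g p ≠ x) := by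
          intro x hx
          have hxw := Finset.ne_of_mem_erase hx
          have hxE := Finset.mem_of_mem_erase hx
          rw [pathEdge] at hxE
          obtain ⟨l, hl, hfl⟩ := Finset.mem_image.1 hxE
          rw [Finset.mem_range] at hl
          rcases Nat.eq_zero_or_pos l with hl0 | hl0
          · -- connector u at position 0
            right
            intro p hp habs
            have : f (j*(k-1)+l) = u ((j-1)/2) := by
              rw [hl0, Nat.add_zero]
              exact hfu j hjo'
            rw [this] at hfl
            rw [← hfl] at habs
            exact hug _ (huidx j (by omega) hjo') _ hp habs
          · rcases Nat.lt_or_ge l (k-1) with hlc | hlc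
            · left
              exact ⟨l, by omega, by omega, by rw [← hfl, hmid l (by omega) (by omega)]⟩
            · exfalso
              apply hxw
              rw [← hfl]
              have hle : l = k-1 := by omega
              rw [hle, ← hstep j]
              exact hfw (j+1) (by omega) hjq
        have hres := forced_blue_2 hk hn hinj hred hnop j (by omega) _ hTcard hTmem
        have hmlt : (j+1)*(k-1) < n*(k-1) := by
          have h1 : (j+2)*(k-1) ≤ n*(k-1) := Nat.mul_le_mul_right _ (by omega)
          have h2 : (j+2)*(k-1) = (j+1)*(k-1) + (k-1) := by ring
          omega
        rw [Nat.mod_eq_of_lt hmlt] at hres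
        rwa [Finset.insert_erase hwE] at hres
      · -- j = q-1 with q even : FB1 with w = g ((q-1)*(k-1)) at position k-1
        have hjeq : j = q - 1 := by omega
        have hqe : q % 2 = 0 := by omega
        have hwE : g (j*(k-1)) ∈ pathEdge k f j := by
          rw [pathEdge]
          refine Finset.mem_image.2 ⟨k-1, Finset.mem_range.2 (by omega), ?_⟩
          rw [← hstep j, show (j+1)*(k-1) = q*(k-1) from by rw [hjeq, Nat.sub_add_cancel hq1]]
          rw [hfspec hqe, hjeq]
        have hTcard : ((pathEdge k f j).erase (g (j*(k-1)))).card = k - 1 := by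
          rw [Finset.card_erase_of_mem hwE, hEcard]
        have hTmem : ∀ x ∈ (pathEdge k f j).erase (g (j*(k-1))),
            (∃ l, 1 ≤ l ∧ l ≤ k-2 ∧ x = g (j*(k-1)+l)) ∨ (∀ p < n*(k-1), g p ≠ x) := by
          intro x hx
          have hxw := Finset.ne_of_mem_erase hx
          have hxE := Finset.mem_of_mem_erase hx
          rw [pathEdge] at hxE
          obtain ⟨l, hl, hfl⟩ := Finset.mem_image.1 hxE
          rw [Finset.mem_range] at hl
          rcases Nat.eq_zero_or_pos l with hl0 | hl0
          · right
            intro p hp habs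
            have : f (j*(k-1)+l) = u ((j-1)/2) := by
              rw [hl0, Nat.add_zero]
              exact hfu j hjo'
            rw [this] at hfl
            rw [← hfl] at habs
            exact hug _ (huidx j (by omega) hjo') _ hp habs
          · rcases Nat.lt_or_ge l (k-1) with hlc | hlc
            · left
              exact ⟨l, by omega, by omega, by rw [← hfl, hmid l (by omega) (by omega)]⟩
            · exfalso
              apply hxw
              rw [← hfl]
              have hle : l = k-1 := by omega
              rw [hle, ← hstep j, show (j+1)*(k-1) = q*(k-1) from by rw [hjeq, Nat.sub_add_cancel hq1]]
              rw [hfspec hqe, hjeq]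
        have hres := forced_blue_1 hk hn hinj hred hnop j (by omega) _ hTcard hTmem
        rwa [Finset.insert_erase hwE] at hres

end Constructions
section CycleConstruction
variable {N k n : ℕ} {col : Finset (Fin N) → Bool} {g : ℕ → Fin N}

lemma blue_cycle_of_red_cycle (hk : 3 ≤ k) {m : ℕ} (hm2 : 2 ≤ m) (hmn : m ≤ n)
    (hinj : Set.InjOn g (Set.Iio (n*(k-1))))
    (hred : ∀ i < n, col (cycleEdge k n g i) = true)
    (hnop : ¬ hasPath k n col true)
    (hN : n*(k-1) + (m+1)/2 ≤ N) :
    hasCycle k m col false := by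
  classical
  have hn : 1 ≤ n := by omega
  have hc2 : 2 ≤ k - 1 := by omega
  obtain ⟨u, hug, huinj⟩ := exists_outside hk hn ((m+1)/2) hinj hN
  set t := (m+1)/2 with ht
  have hmul : ∀ j : ℕ, (j*(k-1)) / (k-1) = j := fun j => Nat.mul_div_cancel _ (by omega)
  have hmodz : ∀ j : ℕ, (j*(k-1)) % (k-1) = 0 := fun j => Nat.mul_mod_left _ _
  have hstep : ∀ j : ℕ, (j+1)*(k-1) = j*(k-1) + (k-1) := fun j => by ring
  have hsubm : (m-1)*(k-1) + (k-1) = m*(k-1) := sub_one_mul_add m (k-1) (by omega)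
  have hmcM : m*(k-1) ≤ n*(k-1) := Nat.mul_le_mul_right _ hmn
  have hMCpos : 0 < m*(k-1) := by omega
  have hintmod : ∀ j l, 1 ≤ l → l ≤ k-2 → (j*(k-1)+l) % (k-1) = l := by
    intro j l h1 h2
    rw [Nat.add_comm, Nat.add_mul_mod_self_right, Nat.mod_eq_of_lt (by omega)]
  have hspecmod : (m*(k-1)-1) % (k-1) = k-2 := by
    have h1 : m*(k-1)-1 = (m-1)*(k-1) + (k-2) := by omega
    rw [h1, hintmod (m-1) (k-2) (by omega) (le_refl _)]
  -- the blue cycle map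
  set f : ℕ → Fin N := fun p =>
    if p % (k-1) = 0 ∧ (p/(k-1)) % 2 = 0 then u (p/(k-1)/2)
    else if m % 2 = 1 ∧ p = m*(k-1)-1 then g ((m-1)*(k-1))
    else g p with hf
  -- evaluations
  have hfu : ∀ j, j % 2 = 0 → f (j*(k-1)) = u (j/2) := by
    intro j hj
    have h1 : (j*(k-1)) % (k-1) = 0 ∧ ((j*(k-1))/(k-1)) % 2 = 0 := by
      rw [hmul, hmodz]; exact ⟨rfl, hj⟩
    simp only [hf, if_pos h1, hmul]
  have hfw : ∀ j, j % 2 = 1 → f (j*(k-1)) = g (j*(k-1)) := by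
    intro j hj
    have hne : ¬ ((j*(k-1)) % (k-1) = 0 ∧ ((j*(k-1))/(k-1)) % 2 = 0) := by
      rw [hmul, hmodz]; omega
    have hne2 : ¬ (m % 2 = 1 ∧ j*(k-1) = m*(k-1)-1) := by
      intro ⟨_, h2⟩
      have h3 := hmodz j
      rw [h2, hspecmod] at h3
      omega
    simp only [hf, if_neg hne, if_neg hne2]
  have hfspec : m % 2 = 1 → f (m*(k-1)-1) = g ((m-1)*(k-1)) := by
    intro hmo
    have hne : ¬ ((m*(k-1)-1) % (k-1) = 0 ∧ ((m*(k-1)-1)/(k-1)) % 2 = 0) := by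
      rw [hspecmod]; omega
    simp only [hf, if_neg hne]
    simp [hmo]
  have hfint : ∀ p, p % (k-1) ≠ 0 → ¬ (m % 2 = 1 ∧ p = m*(k-1)-1) → f p = g p := by
    intro p hp hp2
    simp only [hf, if_neg (by tauto : ¬ ((p % (k-1) = 0) ∧ (p/(k-1)) % 2 = 0)), if_neg hp2]
  have huidx : ∀ j, j ≤ m-1 → j/2 < t := by intro j h1; omega
  -- classification
  have hclass : ∀ p, p < m*(k-1) →
      (∃ j, j ≤ m-1 ∧ j % 2 = 0 ∧ p = j*(k-1) ∧ f p = u (j/2)) ∨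
      (∃ i, i < n*(k-1) ∧ f p = g i ∧ ((m % 2 = 1 ∧ p = m*(k-1)-1 ∧ i = (m-1)*(k-1)) ∨
        (i = p ∧ ¬ (p % (k-1) = 0 ∧ (p/(k-1)) % 2 = 0) ∧ ¬ (m % 2 = 1 ∧ p = m*(k-1)-1)))) := by
    intro p hp
    by_cases h1 : p % (k-1) = 0 ∧ (p/(k-1)) % 2 = 0
    · left
      obtain ⟨h1a, h1b⟩ := h1
      have hpe : p = (p/(k-1))*(k-1) := (Nat.div_mul_cancel (Nat.dvd_of_mod_eq_zero h1a)).symm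
      refine ⟨p/(k-1), ?_, h1b, hpe, ?_⟩
      · by_contra hcon
        push_neg at hcon
        have h5 : m*(k-1) ≤ (p/(k-1))*(k-1) := Nat.mul_le_mul_right _ (by omega)
        omega
      · conv_lhs => rw [hpe]
        rw [hfu _ h1b]
    · right
      by_cases h2 : m % 2 = 1 ∧ p = m*(k-1)-1
      · refine ⟨(m-1)*(k-1), by omega, ?_, Or.inl ⟨h2.1, h2.2, rfl⟩⟩
        rw [h2.2, hfspec h2.1]
      · refine ⟨p, by omega, ?_, Or.inr ⟨rfl, h1, h2⟩⟩
        simp only [hf, if_neg h1, if_neg h2]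
  -- injectivity
  have hfinj : ∀ p1 p2, p1 < m*(k-1) → p2 < m*(k-1) → f p1 = f p2 → p1 = p2 := by
    intro p1 p2 hp1 hp2 heq
    rcases hclass p1 hp1 with ⟨j1, hj1, ho1, he1, hv1⟩ | ⟨i1, hi1, hv1, hc1⟩ <;>
      rcases hclass p2 hp2 with ⟨j2, hj2, ho2, he2, hv2⟩ | ⟨i2, hi2, hv2, hc2⟩
    · rw [hv1, hv2] at heq
      have h5 := huinj _ _ (huidx _ hj1) (huidx _ hj2) heq
      have : j1 = j2 := by omega
      rw [he1, he2, this]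
    · exfalso
      rw [hv1, hv2] at heq
      exact hug _ (huidx _ hj1) _ hi2 heq.symm
    · exfalso
      rw [hv1, hv2] at heq
      exact hug _ (huidx _ hj2) _ hi1 heq
    · rw [hv1, hv2] at heq
      have hieq : i1 = i2 := hinj (Set.mem_Iio.2 hi1) (Set.mem_Iio.2 hi2) heq
      rcases hc1 with ⟨hma, hpa, hia⟩ | ⟨hia, hno, hns⟩ <;>
        rcases hc2 with ⟨hmb, hpb, hib⟩ | ⟨hib, hnob, hnsb⟩
      · omega
      · exfalso
        apply hnob
        have hp2e : p2 = (m-1)*(k-1) := by omega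
        rw [hp2e, hmul, hmodz]
        exact ⟨rfl, by omega⟩
      · exfalso
        apply hno
        have hp1e : p1 = (m-1)*(k-1) := by omega
        rw [hp1e, hmul, hmodz]
        exact ⟨rfl, by omega⟩
      · omega
  -- position bounds within edges
  have hposlt : ∀ i l, i < m → l < k → (i*(k-1) + l) % (m*(k-1)) < m*(k-1) :=
    fun i l _ _ => Nat.mod_lt _ hMCpos
  refine ⟨f, ?_, ?_⟩
  · intro p1 hp1 p2 hp2 heq
    exact hfinj p1 p2 hp1 hp2 heq
  · intro i hi
    -- positions in the edge are ≤ m*(k-1)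
    have hvb : ∀ l, l < k → i*(k-1)+l ≤ m*(k-1) := by
      intro l hl
      have h1 : (i+1)*(k-1) ≤ m*(k-1) := Nat.mul_le_mul_right _ (by omega)
      have := hstep i
      omega
    have hposinj : ∀ l1 l2, l1 < k → l2 < k →
        (i*(k-1)+l1) % (m*(k-1)) = (i*(k-1)+l2) % (m*(k-1)) → l1 = l2 := by
      intro l1 l2 hl1 hl2 he
      have hmeq : (i*(k-1)+l1) ≡ (i*(k-1)+l2) [MOD m*(k-1)] := he
      have hmeq2 : l1 ≡ l2 [MOD m*(k-1)] := Nat.ModEq.add_left_cancel' _ hmeq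
      have h3 : l1 % (m*(k-1)) = l2 % (m*(k-1)) := hmeq2
      have h9 : 2*(k-1) ≤ m*(k-1) := Nat.mul_le_mul_right _ hm2
      rw [Nat.mod_eq_of_lt (by omega), Nat.mod_eq_of_lt (by omega)] at h3
      exact h3
    have hEcard : (cycleEdge k m f i).card = k := by
      rw [cycleEdge, Finset.card_image_of_injOn, Finset.card_range]
      intro l1 hl1 l2 hl2 he
      simp only [Finset.coe_range, Set.mem_Iio] at hl1 hl2
      exact hposinj l1 l2 hl1 hl2 (hfinj _ _ (hposlt i l1 hi hl1) (hposlt i l2 hi hl2) he)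
    -- value of f at edge position l
    have hedgepos : ∀ l, l < k → (i*(k-1)+l) % (m*(k-1)) =
        if i = m-1 ∧ l = k-1 then 0 else i*(k-1)+l := by
      intro l hl
      by_cases hc : i = m-1 ∧ l = k-1
      · rw [if_pos hc]
        have : i*(k-1)+l = m*(k-1) := by
          rw [hc.1, hc.2]; omega
        rw [this, Nat.mod_self]
      · rw [if_neg hc]
        apply Nat.mod_eq_of_lt
        have h1 : (i+1)*(k-1) ≤ m*(k-1) := Nat.mul_le_mul_right _ (by omega)
        have h2 := hstep i
        rcases Nat.lt_or_ge i (m-1) with h | h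
        · have h3 : (i+1)*(k-1) ≤ (m-1)*(k-1) := Nat.mul_le_mul_right _ (by omega)
          omega
        · have hieq : i = m-1 := by omega
          have : l ≠ k-1 := fun hle => hc ⟨hieq, hle⟩
          omega
    -- interior memberships (generic)
    have hmidmem : ∀ l, 1 ≤ l → l ≤ k-2 → ¬ (i = m-1 ∧ m % 2 = 1 ∧ l = k-2) →
        f (i*(k-1)+l) = g (i*(k-1)+l) := by
      intro l h1 h2 hns
      apply hfint
      · rw [hintmod i l h1 h2]; omega
      · intro ⟨hmo, hpe⟩
        apply hns
        have hd : i*(k-1)+l = (m-1)*(k-1) + (k-2) := by omega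
        have := eq_decompose (by omega : 1 ≤ k-1) (by omega : l ≤ k-1)
          (by omega : k-2 ≤ k-1) hd
        rcases this with ⟨e1,e2⟩ | ⟨e1,e2,e3⟩ | ⟨e1,e2,e3⟩ <;> omega
    rcases Nat.even_or_odd i with hie | hio
    · -- i even
      have hie' : i % 2 = 0 := Nat.even_iff.1 hie
      rcases Nat.lt_or_ge i (m-1) with him | him
      · -- FB2 with w = g ((i+1)*(k-1)) at position k-1
        have hwE : g ((i+1)*(k-1)) ∈ cycleEdge k m f i := by
          rw [cycleEdge]
          refine Finset.mem_image.2 ⟨k-1, Finset.mem_range.2 (by omega), ?_⟩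
          rw [hedgepos (k-1) (by omega), if_neg (by omega : ¬ (i = m-1 ∧ k-1 = k-1))]
          rw [← hstep i]
          exact hfw (i+1) (by omega)
        have hTcard : ((cycleEdge k m f i).erase (g ((i+1)*(k-1)))).card = k - 1 := by
          rw [Finset.card_erase_of_mem hwE, hEcard]
        have hTmem : ∀ x ∈ (cycleEdge k m f i).erase (g ((i+1)*(k-1))),
            (∃ l, 1 ≤ l ∧ l ≤ k-2 ∧ x = g (i*(k-1)+l)) ∨ (∀ p < n*(k-1), g p ≠ x) := by
          intro x hx
          have hxw := Finset.ne_of_mem_erase hx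
          have hxE := Finset.mem_of_mem_erase hx
          rw [cycleEdge] at hxE
          obtain ⟨l, hl, hfl⟩ := Finset.mem_image.1 hxE
          rw [Finset.mem_range] at hl
          rw [hedgepos l hl, if_neg (by omega : ¬ (i = m-1 ∧ l = k-1))] at hfl
          rcases Nat.eq_zero_or_pos l with hl0 | hl0
          · right
            intro p hp habs
            have he : f (i*(k-1)+l) = u (i/2) := by
              rw [hl0, Nat.add_zero]; exact hfu i hie'
            rw [he] at hfl
            rw [← hfl] at habs
            exact hug _ (huidx i (by omega)) _ hp habs
          · rcases Nat.lt_or_ge l (k-1) with hlc | hlc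
            · left
              refine ⟨l, by omega, by omega, ?_⟩
              rw [← hfl, hmidmem l (by omega) (by omega) (by omega)]
            · exfalso
              apply hxw
              rw [← hfl]
              have hle : l = k-1 := by omega
              rw [hle, ← hstep i]
              exact hfw (i+1) (by omega)
        have hres := forced_blue_2 hk hn hinj hred hnop i (by omega) _ hTcard hTmem
        have hmlt : (i+1)*(k-1) < n*(k-1) := by
          have h1 : (i+2)*(k-1) ≤ n*(k-1) := Nat.mul_le_mul_right _ (by omega)
          have h2 : (i+2)*(k-1) = (i+1)*(k-1)+(k-1) := by ring
          omega
        rw [Nat.mod_eq_of_lt hmlt] at hres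
        rwa [Finset.insert_erase hwE] at hres
      · -- i = m-1 even, m odd : FB1 with w = g ((m-1)*(k-1)) at position k-2
        have hieq : i = m-1 := by omega
        have hmo : m % 2 = 1 := by omega
        have hwE : g (i*(k-1)) ∈ cycleEdge k m f i := by
          rw [cycleEdge]
          refine Finset.mem_image.2 ⟨k-2, Finset.mem_range.2 (by omega), ?_⟩
          rw [hedgepos (k-2) (by omega), if_neg (by omega : ¬ (i = m-1 ∧ k-2 = k-1))]
          have hpe : i*(k-1)+(k-2) = m*(k-1)-1 := by
            rw [hieq]; omega
          rw [hpe, hfspec hmo, hieq]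
        have hTcard : ((cycleEdge k m f i).erase (g (i*(k-1)))).card = k - 1 := by
          rw [Finset.card_erase_of_mem hwE, hEcard]
        have hTmem : ∀ x ∈ (cycleEdge k m f i).erase (g (i*(k-1))),
            (∃ l, 1 ≤ l ∧ l ≤ k-2 ∧ x = g (i*(k-1)+l)) ∨ (∀ p < n*(k-1), g p ≠ x) := by
          intro x hx
          have hxw := Finset.ne_of_mem_erase hx
          have hxE := Finset.mem_of_mem_erase hx
          rw [cycleEdge] at hxE
          obtain ⟨l, hl, hfl⟩ := Finset.mem_image.1 hxE
          rw [Finset.mem_range] at hl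
          rcases Nat.lt_or_ge l (k-1) with hlk | hlk
          · rw [hedgepos l hl, if_neg (by omega : ¬ (i = m-1 ∧ l = k-1))] at hfl
            rcases Nat.eq_zero_or_pos l with hl0 | hl0
            · right
              intro p hp habs
              have he : f (i*(k-1)+l) = u (i/2) := by
                rw [hl0, Nat.add_zero]; exact hfu i hie'
              rw [he] at hfl
              rw [← hfl] at habs
              exact hug _ (huidx i (by omega)) _ hp habs
            · rcases Nat.lt_or_ge l (k-2) with hlc | hlc
              · left
                refine ⟨l, by omega, by omega, ?_⟩
                rw [← hfl, hmidmem l (by omega) (by omega) (by omega)]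
              · exfalso
                apply hxw
                rw [← hfl]
                have hle : l = k-2 := by omega
                have hpe : i*(k-1)+l = m*(k-1)-1 := by
                  rw [hle, hieq]; omega
                rw [hpe, hfspec hmo, hieq]
          · -- l = k-1 : wraps to position 0, a u-vertex
            have hle : l = k-1 := by omega
            rw [hedgepos l hl, if_pos ⟨hieq, hle⟩] at hfl
            right
            intro p hp habs
            have he : f 0 = u 0 := by
              have h0 := hfu 0 (by omega)
              simpa using h0
            rw [he] at hfl
            rw [← hfl] at habs
            exact hug _ (by omega) _ hp habs
        have hres := forced_blue_1 hk hn hinj hred hnop i (by omega) _ hTcard hTmem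
        rwa [Finset.insert_erase hwE] at hres
    · -- i odd : FB1 with w = g (i*(k-1)) at position 0
      have hio' : i % 2 = 1 := Nat.odd_iff.1 hio
      have hwE : g (i*(k-1)) ∈ cycleEdge k m f i := by
        rw [cycleEdge]
        refine Finset.mem_image.2 ⟨0, Finset.mem_range.2 (by omega), ?_⟩
        rw [hedgepos 0 (by omega), if_neg (by omega : ¬ (i = m-1 ∧ 0 = k-1))]
        rw [Nat.add_zero]
        exact hfw i hio'
      have hTcard : ((cycleEdge k m f i).erase (g (i*(k-1)))).card = k - 1 := by
        rw [Finset.card_erase_of_mem hwE, hEcard]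
      have hTmem : ∀ x ∈ (cycleEdge k m f i).erase (g (i*(k-1))),
          (∃ l, 1 ≤ l ∧ l ≤ k-2 ∧ x = g (i*(k-1)+l)) ∨ (∀ p < n*(k-1), g p ≠ x) := by
        intro x hx
        have hxw := Finset.ne_of_mem_erase hx
        have hxE := Finset.mem_of_mem_erase hx
        rw [cycleEdge] at hxE
        obtain ⟨l, hl, hfl⟩ := Finset.mem_image.1 hxE
        rw [Finset.mem_range] at hl
        rcases Nat.lt_or_ge l (k-1) with hlk | hlk
        · rcases Nat.eq_zero_or_pos l with hl0 | hl0
          · exfalso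
            apply hxw
            rw [← hfl, hedgepos l hl, if_neg (by omega : ¬ (i = m-1 ∧ l = k-1))]
            rw [hl0, Nat.add_zero]
            exact hfw i hio'
          · left
            rw [hedgepos l hl, if_neg (by omega : ¬ (i = m-1 ∧ l = k-1))] at hfl
            refine ⟨l, by omega, by omega, ?_⟩
            rw [← hfl, hmidmem l (by omega) (by omega) (by omega)]
        · -- l = k-1 : the next connector, a u-vertex
          have hle : l = k-1 := by omega
          right
          intro p hp habs
          rcases Nat.lt_or_ge i (m-1) with him | him
          · rw [hedgepos l hl, if_neg (by omega : ¬ (i = m-1 ∧ l = k-1))] at hfl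
            have he : f (i*(k-1)+l) = u ((i+1)/2) := by
              rw [hle, ← hstep i]
              exact hfu (i+1) (by omega)
            rw [he] at hfl
            rw [← hfl] at habs
            exact hug _ (by omega) _ hp habs
          · have hieq : i = m-1 := by omega
            rw [hedgepos l hl, if_pos ⟨hieq, hle⟩] at hfl
            have he : f 0 = u 0 := by
              have h0 := hfu 0 (by omega)
              simpa using h0
            rw [he] at hfl
            rw [← hfl] at habs
            exact hug _ (by omega) _ hp habs
      have hres := forced_blue_1 hk hn hinj hred hnop i (by omega) _ hTcard hTmem
      rwa [Finset.insert_erase hwE] at hres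

end CycleConstruction
theorem ramsey_cycle_implies_path_ramsey (k n m : ℕ) (hk : 3 ≤ k) (hm : 2 ≤ m) (hnm : m ≤ n)
    (h : ramseyCC k n m = (k - 1) * n + (m - 1) / 2) :
    ramseyPC k n m = (k - 1) * n + (m + 1) / 2 ∧
    ramseyPP k n (m - 1) = (k - 1) * n + m / 2 ∧
    (n = m → ramseyPP k n n = (k - 1) * n + (n + 1) / 2) := by
  classical
  have hn : 1 ≤ n := by omega
  have hco : (k-1)*n = n*(k-1) := Nat.mul_comm _ _
  have hknbig : 2*2 ≤ (k-1)*n := Nat.mul_le_mul (by omega) (by omega)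
  have h' : sInf {N | ∀ col : Finset (Fin N) → Bool,
      hasCycle k n col true ∨ hasCycle k m col false} = (k-1)*n + (m-1)/2 := h
  set v0 := (k-1)*n + (m-1)/2 with hv0def
  have hSne : {N | ∀ col : Finset (Fin N) → Bool,
      hasCycle k n col true ∨ hasCycle k m col false}.Nonempty := by
    by_contra hne
    rw [Set.not_nonempty_iff_eq_empty] at hne
    rw [hne, Nat.sInf_empty] at h'
    omega
  have hv0 : ∀ col : Finset (Fin v0) → Bool,
      hasCycle k n col true ∨ hasCycle k m col false := by
    have hmem := Nat.sInf_mem hSne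
    rw [h'] at hmem
    exact hmem
  -- generic red-cycle handler
  have redCase : ∀ (NN : ℕ) (hle : v0 ≤ NN) (col : Finset (Fin NN) → Bool),
      hasCycle k n (fun s : Finset (Fin v0) => col (s.image (Fin.castLE hle))) true →
      ¬ hasPath k n col true →
      ∃ g : ℕ → Fin NN, Set.InjOn g (Set.Iio (n*(k-1))) ∧
        (∀ i < n, col (cycleEdge k n g i) = true) := by
    intro NN hle col hr hnop
    obtain ⟨g, hginj, hgred⟩ := hasCycle_push hle col k n true hr
    exact ⟨g, hginj, hgred⟩
  refine ⟨?_, ?_, ?_⟩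
  · -- R(P_n, C_m)
    set v1 := (k-1)*n + (m+1)/2 with hv1def
    have hle : v0 ≤ v1 := by omega
    have hmemb : v1 ∈ {N | ∀ col : Finset (Fin N) → Bool,
        hasPath k n col true ∨ hasCycle k m col false} := by
      intro col
      rcases hv0 (fun s : Finset (Fin v0) => col (s.image (Fin.castLE hle))) with hr | hb
      · by_cases hp : hasPath k n col true
        · left; exact hp
        · right
          obtain ⟨g, hginj, hgred⟩ := redCase v1 hle col hr hp
          exact blue_cycle_of_red_cycle hk hm hnm hginj hgred hp (by omega)
      · right
        exact hasCycle_push hle col k m false hb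
    apply le_antisymm
    · exact Nat.sInf_le hmemb
    · apply le_csInf ⟨v1, hmemb⟩
      intro x hx
      by_contra hlt
      push_neg at hlt
      have hWle : x - (k-1)*n ≤ (Finset.univ : Finset (Fin x)).card := by
        rw [Finset.card_univ, Fintype.card_fin]; omega
      obtain ⟨W, _, hWcard⟩ := Finset.exists_subset_card_eq hWle
      rcases hx (colW W) with hred | hblue
      · exact no_red_path hk hn W (by omega) hred
      · exact no_blue_cycle hk (by omega) W (by omega) hblue
  · -- R(P_n, P_{m-1})
    set v2 := (k-1)*n + m/2 with hv2def
    have hle : v0 ≤ v2 := by omega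
    have hmemb : v2 ∈ {N | ∀ col : Finset (Fin N) → Bool,
        hasPath k n col true ∨ hasPath k (m-1) col false} := by
      intro col
      rcases hv0 (fun s : Finset (Fin v0) => col (s.image (Fin.castLE hle))) with hr | hb
      · by_cases hp : hasPath k n col true
        · left; exact hp
        · right
          obtain ⟨g, hginj, hgred⟩ := redCase v2 hle col hr hp
          exact blue_path_of_red_cycle hk (by omega : 1 ≤ m-1) (by omega : m-1 ≤ n)
            hginj hgred hp (by omega)
      · right
        exact hasPath_of_hasCycle (by omega) (by omega) (hasCycle_push hle col k m false hb)
    apply le_antisymm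
    · exact Nat.sInf_le hmemb
    · apply le_csInf ⟨v2, hmemb⟩
      intro x hx
      by_contra hlt
      push_neg at hlt
      have hWle : x - (k-1)*n ≤ (Finset.univ : Finset (Fin x)).card := by
        rw [Finset.card_univ, Fintype.card_fin]; omega
      obtain ⟨W, _, hWcard⟩ := Finset.exists_subset_card_eq hWle
      rcases hx (colW W) with hred | hblue
      · exact no_red_path hk hn W (by omega) hred
      · exact no_blue_path hk (by omega : 1 ≤ m-1) W (by omega) hblue
  · -- R(P_n, P_n) when n = m
    rintro rfl
    set v3 := (k-1)*n + (n+1)/2 with hv3def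
    have hle : v0 ≤ v3 := by omega
    have hmemb : v3 ∈ {N | ∀ col : Finset (Fin N) → Bool,
        hasPath k n col true ∨ hasPath k n col false} := by
      intro col
      rcases hv0 (fun s : Finset (Fin v0) => col (s.image (Fin.castLE hle))) with hr | hb
      · by_cases hp : hasPath k n col true
        · left; exact hp
        · right
          obtain ⟨g, hginj, hgred⟩ := redCase v3 hle col hr hp
          exact blue_path_of_red_cycle hk hn le_rfl hginj hgred hp (by omega)
      · -- blue cycle : swap colors
        have hbc : hasCycle k n col false := hasCycle_push hle col k n false hb
        by_cases hbp : hasPath k n col false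
        · right; exact hbp
        · left
          set col' : Finset (Fin v3) → Bool := fun E => ! (col E) with hcol'
          have hbc' : hasCycle k n col' true := by
            obtain ⟨g0, hgi, hge⟩ := hbc
            refine ⟨g0, hgi, fun i hi => ?_⟩
            simp only [hcol', hge i hi, Bool.not_false]
          have hnop' : ¬ hasPath k n col' true := by
            rintro ⟨f0, hfi, hfe⟩
            apply hbp
            refine ⟨f0, hfi, fun i hi => ?_⟩
            have := hfe i hi
            simp only [hcol', Bool.not_eq_true'] at this
            exact this
          obtain ⟨g, hginj, hgred⟩ := hbc'
          have hres := blue_path_of_red_cycle hk hn le_rfl hginj hgred hnop' (by omega)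
          obtain ⟨f0, hfi, hfe⟩ := hres
          refine ⟨f0, hfi, fun i hi => ?_⟩
          have := hfe i hi
          simp only [hcol', Bool.not_eq_false'] at this
          exact this
    apply le_antisymm
    · exact Nat.sInf_le hmemb
    · apply le_csInf ⟨v3, hmemb⟩
      intro x hx
      by_contra hlt
      push_neg at hlt
      have hWle : x - (k-1)*n ≤ (Finset.univ : Finset (Fin x)).card := by
        rw [Finset.card_univ, Fintype.card_fin]; omega
      obtain ⟨W, _, hWcard⟩ := Finset.exists_subset_card_eq hWle
      rcases hx (colW W) with hred | hblue
      · exact no_red_path hk hn W (by omega) hred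
      · exact no_blue_path hk hn W (by omega) hblue
end

section
/- The following two statements are equivalent: (i) for every integer k ≥ 3 and all integers n ≥ m ≥ 3, R(P^k_n, P^k_m) = R(P^k_n, C^k_m) = R(C^k_n, C^k_m) + 1 = (k−1)n + ⌊(m+1)/2⌋; (ii) for every integer k ≥ 3 and all integers n ≥ m ≥ 3, R(C^k_n, C^k_m) = (k−1)n + ⌊(m−1)/2⌋. -/
open Finset

section helpers

variable {V : Type} [DecidableEq V]

lemma mul_succ_le {i i' c : ℕ} (h : i < i') : i * c + c ≤ i' * c := by
  have h2 : (i + 1) * c ≤ i' * c := Nat.mul_le_mul_right c h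
  rw [add_mul, one_mul] at h2; omega

lemma addMul_inj {c a b a' b' : ℕ} (hb : b < c) (hb' : b' < c)
    (h : a * c + b = a' * c + b') : a = a' ∧ b = b' := by
  rcases Nat.lt_trichotomy a a' with h' | h' | h'
  · have h2 := mul_succ_le (c := c) h'; omega
  · subst h'; omega
  · have h2 := mul_succ_le (c := c) h'; omega

lemma split_mod {c i d : ℕ} (hc : 0 < c) (hd : d < c) :
    (i * c + d) % c = d ∧ (i * c + d) / c = i := by
  constructor
  · rw [add_comm, Nat.add_mul_mod_self_right, Nat.mod_eq_of_lt hd]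
  · rw [add_comm, Nat.add_mul_div_right _ _ hc, Nat.div_eq_of_lt hd, zero_add]

lemma swap_range_lt {k a b j : ℕ} (ha : a < k) (hb : b < k) (hj : j < k) :
    Equiv.swap a b j < k := by
  by_cases h1 : j = a
  · simp [h1, Equiv.swap_apply_left]; omega
  · by_cases h2 : j = b
    · simp [h2, Equiv.swap_apply_right]; omega
    · rw [Equiv.swap_apply_of_ne_of_ne h1 h2]; omega

lemma image_range_swap {k a b : ℕ} (f₁ f₂ : ℕ → V) (ha : a < k) (hb : b < k)
    (hcomp : ∀ j, f₁ j = f₂ (Equiv.swap a b j)) :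
    (range k).image f₁ = (range k).image f₂ := by
  ext x
  simp only [mem_image, mem_range]
  constructor
  · rintro ⟨j, hj, rfl⟩
    exact ⟨Equiv.swap a b j, swap_range_lt ha hb hj, (hcomp j).symm⟩
  · rintro ⟨j, hj, rfl⟩
    refine ⟨Equiv.swap a b j, swap_range_lt ha hb hj, ?_⟩
    rw [hcomp (Equiv.swap a b j), Equiv.swap_apply_self]

lemma hasPath_map {k n : ℕ} {W : Type} [DecidableEq W] (e : V → W)
    (he : Function.Injective e) (col : Finset W → Bool) (b : Bool)
    (h : hasPath k n (fun s => col (s.image e)) b) : hasPath k n col b := by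
  obtain ⟨f, hf, hcol⟩ := h
  refine ⟨e ∘ f, fun p hp q hq hpq => hf hp hq (he hpq), fun i hi => ?_⟩
  have : pathEdge k (e ∘ f) i = (pathEdge k f i).image e := by
    unfold pathEdge; rw [Finset.image_image]; rfl
  rw [this]; exact hcol i hi

lemma hasCycle_map {k n : ℕ} {W : Type} [DecidableEq W] (e : V → W)
    (he : Function.Injective e) (col : Finset W → Bool) (b : Bool)
    (h : hasCycle k n (fun s => col (s.image e)) b) : hasCycle k n col b := by
  obtain ⟨f, hf, hcol⟩ := h
  refine ⟨e ∘ f, fun p hp q hq hpq => hf hp hq (he hpq), fun i hi => ?_⟩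
  have : cycleEdge k n (e ∘ f) i = (cycleEdge k n f i).image e := by
    unfold cycleEdge; rw [Finset.image_image]; rfl
  rw [this]; exact hcol i hi

lemma hasCycle_succ_path {k m : ℕ} (hk : 3 ≤ k) {col : Finset V → Bool} {b : Bool}
    (h : hasCycle k (m + 1) col b) : hasPath k m col b := by
  obtain ⟨f, hf, hcol⟩ := h
  have hle : m * (k - 1) + 1 ≤ (m + 1) * (k - 1) := by
    rw [add_mul, one_mul]; omega
  refine ⟨f, fun p hp q hq hpq => hf ?_ ?_ hpq, fun i hi => ?_⟩
  · exact lt_of_lt_of_le hp hle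
  · exact lt_of_lt_of_le hq hle
  · have : pathEdge k f i = cycleEdge k (m + 1) f i := by
      unfold pathEdge cycleEdge
      apply Finset.image_congr
      intro j hj
      simp only [mem_range, mem_coe] at hj
      have h1 : i * (k - 1) + (k - 1) ≤ m * (k - 1) := by
        have := Nat.mul_le_mul_right (k - 1) (show i + 1 ≤ m by omega)
        rw [add_mul, one_mul] at this; omega
      have h2 : i * (k - 1) + j < (m + 1) * (k - 1) := by
        rw [add_mul, one_mul]; omega
      dsimp only
      rw [Nat.mod_eq_of_lt h2]
    rw [this]; exact hcol i (by omega)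

end helpers

section cand

variable {V : Type} [DecidableEq V]

lemma modMul_eq {r c a d : ℕ} :
    (a % r * c + d) % (r * c) = (a * c + d) % (r * c) := by
  conv_rhs => rw [show a * c + d = a % r * c + d + a / r * (r * c) by
    conv_lhs => rw [← Nat.div_add_mod a r]
    ring]
  rw [Nat.add_mul_mod_self_right]

lemma cand_right {k r : ℕ} (hk : 3 ≤ k) (hr : 1 ≤ r) {col : Finset V → Bool} {b : Bool}
    {f : ℕ → V} (hf : Set.InjOn f (Set.Iio (r * (k - 1))))
    (hcol : ∀ i < r, col (cycleEdge k r f i) = b)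
    {i₀ : ℕ} (hi₀ : i₀ < r) {σ : ℕ → V} (hσ : Set.InjOn σ (Set.Iio k))
    (hlast : σ (k - 1) = f ((i₀ + 1) * (k - 1) % (r * (k - 1))))
    (hmid : ∀ j < k - 1,
      (∃ d, 1 ≤ d ∧ d ≤ k - 2 ∧ σ j = f (i₀ * (k - 1) + d)) ∨
      (∀ q < r * (k - 1), σ j ≠ f q))
    (hX : col ((range k).image σ) = b) : hasPath k r col b := by
  have hkk : 2 ≤ k - 1 := by omega
  have hkey : i₀ * (k - 1) + (k - 1) ≤ r * (k - 1) := mul_succ_le hi₀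
  have hMpos : 0 < r * (k - 1) := by omega
  refine ⟨fun p => if p < k - 1 then σ p
    else f (((i₀ + 1) * (k - 1) + (p - (k - 1))) % (r * (k - 1))), ?_, ?_⟩
  · -- injectivity
    intro p hp q hq hpq
    simp only [Set.mem_Iio] at hp hq
    -- a general mixed-case contradiction
    have mixed : ∀ p' q', p' < k - 1 → k - 1 ≤ q' → q' < r * (k - 1) + 1 →
        σ p' ≠ f (((i₀ + 1) * (k - 1) + (q' - (k - 1))) % (r * (k - 1))) := by
      intro p' q' hp' hq1 hq2 heq
      have hres : ((i₀ + 1) * (k - 1) + (q' - (k - 1))) % (r * (k - 1)) < r * (k - 1) :=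
        Nat.mod_lt _ hMpos
      rcases hmid p' hp' with ⟨d, hd1, hd2, hσp⟩ | hfresh
      · have hidx : i₀ * (k - 1) + d < r * (k - 1) := by omega
        have heq2 : i₀ * (k - 1) + d
            = ((i₀ + 1) * (k - 1) + (q' - (k - 1))) % (r * (k - 1)) := by
          apply hf (Set.mem_Iio.mpr hidx) (Set.mem_Iio.mpr hres)
          rw [← hσp, heq]
        set s := q' - (k - 1) with hs
        have hx : (i₀ + 1) * (k - 1) + s = i₀ * (k - 1) + (k - 1) + s := by ring
        rcases Nat.lt_or_ge ((i₀ + 1) * (k - 1) + s) (r * (k - 1)) with hlt | hge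
        · rw [Nat.mod_eq_of_lt hlt] at heq2; omega
        · rw [Nat.mod_eq_sub_mod hge, Nat.mod_eq_of_lt (by omega)] at heq2; omega
      · exact hfresh _ hres heq
    by_cases hpk : p < k - 1 <;> by_cases hqk : q < k - 1
    · simp only [if_pos hpk, if_pos hqk] at hpq
      exact hσ (Set.mem_Iio.mpr (by omega)) (Set.mem_Iio.mpr (by omega)) hpq
    · simp only [if_pos hpk, if_neg hqk] at hpq
      exact absurd hpq (mixed p q hpk (by omega) hq)
    · simp only [if_neg hpk, if_pos hqk] at hpq
      exact absurd hpq.symm (mixed q p hqk (by omega) hp)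
    · simp only [if_neg hpk, if_neg hqk] at hpq
      have h1 : ((i₀ + 1) * (k - 1) + (p - (k - 1))) % (r * (k - 1))
          = ((i₀ + 1) * (k - 1) + (q - (k - 1))) % (r * (k - 1)) := by
        apply hf (Set.mem_Iio.mpr (Nat.mod_lt _ hMpos)) (Set.mem_Iio.mpr (Nat.mod_lt _ hMpos))
        exact hpq
      have h2 : (p - (k - 1)) % (r * (k - 1)) = (q - (k - 1)) % (r * (k - 1)) :=
        Nat.ModEq.add_left_cancel' ((i₀ + 1) * (k - 1)) h1
      rw [Nat.mod_eq_of_lt (by omega), Nat.mod_eq_of_lt (by omega)] at h2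
      omega
  · -- edges
    intro i hi
    rcases i with _ | j
    · have he : pathEdge k (fun p => if p < k - 1 then σ p
          else f (((i₀ + 1) * (k - 1) + (p - (k - 1))) % (r * (k - 1)))) 0
          = (range k).image σ := by
        unfold pathEdge
        apply Finset.image_congr
        intro j hj
        simp only [Finset.coe_range, Set.mem_Iio] at hj
        dsimp only
        rw [zero_mul, zero_add]
        by_cases hjk : j < k - 1
        · rw [if_pos hjk]
        · rw [if_neg hjk]
          have hj' : j = k - 1 := by omega
          rw [hj', Nat.sub_self, add_zero, hlast]
      rw [he]; exact hX
    · have he : pathEdge k (fun p => if p < k - 1 then σ p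
          else f (((i₀ + 1) * (k - 1) + (p - (k - 1))) % (r * (k - 1)))) (j + 1)
          = cycleEdge k r f ((i₀ + 1 + j) % r) := by
        unfold pathEdge cycleEdge
        apply Finset.image_congr
        intro d hd
        simp only [Finset.coe_range, Set.mem_Iio] at hd
        dsimp only
        have hp1 : ¬ ((j + 1) * (k - 1) + d < k - 1) := by
          rw [add_mul, one_mul]; omega
        rw [if_neg hp1]
        congr 1
        have hsub : (j + 1) * (k - 1) + d - (k - 1) = j * (k - 1) + d := by
          rw [add_mul, one_mul]; omega
        rw [hsub, modMul_eq]
        congr 1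
        ring
      rw [he]
      exact hcol _ (Nat.mod_lt _ (by omega))

lemma cand_left {k r : ℕ} {V : Type} [DecidableEq V] (hk : 3 ≤ k) (hr : 1 ≤ r)
    {col : Finset V → Bool} {b : Bool}
    {f : ℕ → V} (hf : Set.InjOn f (Set.Iio (r * (k - 1))))
    (hcol : ∀ i < r, col (cycleEdge k r f i) = b)
    {i₀ : ℕ} (hi₀ : i₀ < r) {σ : ℕ → V} (hσ : Set.InjOn σ (Set.Iio k))
    (hfirst : σ 0 = f (i₀ * (k - 1)))
    (hmid : ∀ j, 1 ≤ j → j ≤ k - 1 →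
      (∃ d, 1 ≤ d ∧ d ≤ k - 2 ∧ σ j = f (i₀ * (k - 1) + d)) ∨
      (∀ q < r * (k - 1), σ j ≠ f q))
    (hX : col ((range k).image σ) = b) : hasPath k r col b := by
  obtain ⟨r', rfl⟩ : ∃ r', r = r' + 1 := ⟨r - 1, by omega⟩
  have hkk : 2 ≤ k - 1 := by omega
  have hkey : i₀ * (k - 1) + (k - 1) ≤ (r' + 1) * (k - 1) := mul_succ_le hi₀
  have hMx : (r' + 1) * (k - 1) = r' * (k - 1) + (k - 1) := by ring
  have hMpos : 0 < (r' + 1) * (k - 1) := by omega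
  have hbound : ((i₀ + 1) * (k - 1) + r' * (k - 1)) % ((r' + 1) * (k - 1))
      = i₀ * (k - 1) := by
    have h1 : (i₀ + 1) * (k - 1) + r' * (k - 1)
        = i₀ * (k - 1) + (r' + 1) * (k - 1) := by ring
    rw [h1, Nat.add_mod_right, Nat.mod_eq_of_lt (by omega)]
  set g : ℕ → V := fun p => if p < r' * (k - 1)
    then f (((i₀ + 1) * (k - 1) + p) % ((r' + 1) * (k - 1)))
    else σ (p - r' * (k - 1)) with hg
  have hgval : ∀ p ≤ r' * (k - 1),
      g p = f (((i₀ + 1) * (k - 1) + p) % ((r' + 1) * (k - 1))) := by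
    intro p hp
    rcases Nat.lt_or_ge p (r' * (k - 1)) with h | h
    · rw [hg]; dsimp only; rw [if_pos h]
    · have hp' : p = r' * (k - 1) := by omega
      rw [hg]; dsimp only; rw [if_neg (by omega), hp', Nat.sub_self, hfirst, hbound]
  refine ⟨g, ?_, ?_⟩
  · intro p hp q hq hpq
    simp only [Set.mem_Iio] at hp hq
    have mixed : ∀ p' j, p' < r' * (k - 1) → j ≤ k - 1 →
        f (((i₀ + 1) * (k - 1) + p') % ((r' + 1) * (k - 1))) ≠ σ j := by
      intro p' j hp' hj heq
      have hres : ((i₀ + 1) * (k - 1) + p') % ((r' + 1) * (k - 1)) < (r' + 1) * (k - 1) :=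
        Nat.mod_lt _ hMpos
      have hx : (i₀ + 1) * (k - 1) + p' = i₀ * (k - 1) + (k - 1) + p' := by ring
      rcases Nat.eq_zero_or_pos j with rfl | hj1
      · rw [hfirst] at heq
        have h2 := hf (Set.mem_Iio.mpr hres) (Set.mem_Iio.mpr (by omega)) heq
        rcases Nat.lt_or_ge ((i₀ + 1) * (k - 1) + p') ((r' + 1) * (k - 1)) with hlt | hge
        · rw [Nat.mod_eq_of_lt hlt] at h2; omega
        · rw [Nat.mod_eq_sub_mod hge, Nat.mod_eq_of_lt (by omega)] at h2; omega
      · rcases hmid j hj1 hj with ⟨d, hd1, hd2, hσj⟩ | hfresh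
        · rw [hσj] at heq
          have h2 := hf (Set.mem_Iio.mpr hres) (Set.mem_Iio.mpr (by omega)) heq
          rcases Nat.lt_or_ge ((i₀ + 1) * (k - 1) + p') ((r' + 1) * (k - 1)) with hlt | hge
          · rw [Nat.mod_eq_of_lt hlt] at h2; omega
          · rw [Nat.mod_eq_sub_mod hge, Nat.mod_eq_of_lt (by omega)] at h2; omega
        · exact hfresh _ hres heq.symm
    rw [hg] at hpq; dsimp only at hpq
    by_cases hpk : p < r' * (k - 1) <;> by_cases hqk : q < r' * (k - 1)
    · rw [if_pos hpk, if_pos hqk] at hpq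
      have h2 := hf (Set.mem_Iio.mpr (Nat.mod_lt _ hMpos))
        (Set.mem_Iio.mpr (Nat.mod_lt _ hMpos)) hpq
      have h3 : p % ((r' + 1) * (k - 1)) = q % ((r' + 1) * (k - 1)) :=
        Nat.ModEq.add_left_cancel' ((i₀ + 1) * (k - 1)) h2
      rw [Nat.mod_eq_of_lt (by omega), Nat.mod_eq_of_lt (by omega)] at h3
      exact h3
    · rw [if_pos hpk, if_neg hqk] at hpq
      exact absurd hpq (mixed p (q - r' * (k - 1)) hpk (by omega))
    · rw [if_neg hpk, if_pos hqk] at hpq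
      exact absurd hpq.symm (mixed q (p - r' * (k - 1)) hqk (by omega))
    · rw [if_neg hpk, if_neg hqk] at hpq
      have := hσ (Set.mem_Iio.mpr (show p - r' * (k - 1) < k by omega))
        (Set.mem_Iio.mpr (show q - r' * (k - 1) < k by omega)) hpq
      omega
  · intro i hi
    rcases Nat.lt_or_ge i r' with hir | hir
    · have he : pathEdge k g i = cycleEdge k (r' + 1) f ((i₀ + 1 + i) % (r' + 1)) := by
        unfold pathEdge cycleEdge
        apply Finset.image_congr
        intro d hd
        simp only [Finset.coe_range, Set.mem_Iio] at hd
        dsimp only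
        have hple : i * (k - 1) + d ≤ r' * (k - 1) := by
          have := mul_succ_le (c := k - 1) hir; omega
        rw [show g (i * (k - 1) + d) = _ from hgval _ hple]
        congr 1
        rw [modMul_eq]
        congr 1
        ring
      rw [he]
      exact hcol _ (Nat.mod_lt _ (by omega))
    · have hi' : i = r' := by omega
      have he : pathEdge k g i = (range k).image σ := by
        unfold pathEdge
        apply Finset.image_congr
        intro d hd
        simp only [Finset.coe_range, Set.mem_Iio] at hd
        dsimp only
        rw [hg]; dsimp only
        rw [if_neg (by rw [hi']; omega)]
        congr 1
        rw [hi']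
        omega
      rw [he]; exact hX

section lemA

variable {V : Type} [DecidableEq V]


lemma lemA {k r m : ℕ} (hk : 3 ≤ k) (hm : 3 ≤ m) (hmr : m ≤ r)
    {col : Finset V → Bool} {b : Bool}
    {f : ℕ → V} (hf : Set.InjOn f (Set.Iio (r * (k - 1))))
    (hcol : ∀ i < r, col (cycleEdge k r f i) = b)
    {w : ℕ → V} (hw : Set.InjOn w (Set.Iio ((m + 1) / 2)))
    (hwf : ∀ j < (m + 1) / 2, ∀ q < r * (k - 1), w j ≠ f q) :
    hasPath k r col b ∨ hasPath k m col (!b) := by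
  have hkk : 2 ≤ k - 1 := by omega
  have hk1 : 0 < k - 1 := by omega
  have hMm : m * (k - 1) ≤ r * (k - 1) := Nat.mul_le_mul_right _ hmr
  have hm1 : (m - 1) * (k - 1) + (k - 1) ≤ m * (k - 1) := mul_succ_le (by omega)
  have hfr1 : (m - 1) * (k - 1) < r * (k - 1) := by omega
  set g : ℕ → V := fun p =>
    if m % 2 = 0 ∧ p = m * (k - 1) then f ((m - 1) * (k - 1))
    else if p % (k - 1) = 0 ∧ p / (k - 1) % 2 = 1 then w ((p / (k - 1) - 1) / 2)
    else f p with hg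
  -- evaluation lemmas
  have hgw : ∀ i, i % 2 = 1 → i ≤ m → g (i * (k - 1)) = w ((i - 1) / 2) := by
    intro i hi1 hi2
    rw [hg]; dsimp only
    rw [if_neg, if_pos]
    · rw [Nat.mul_div_cancel _ hk1]
    · exact ⟨Nat.mul_mod_left _ _, by rw [Nat.mul_div_cancel _ hk1]; exact hi1⟩
    · rintro ⟨h1, h2⟩
      have := (addMul_inj (a := i) (a' := m) (b := 0) (b' := 0) hk1 hk1 (by omega)).1
      omega
  have hgf0 : ∀ i, i % 2 = 0 → i < m → g (i * (k - 1)) = f (i * (k - 1)) := by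
    intro i hi1 hi2
    rw [hg]; dsimp only
    rw [if_neg, if_neg]
    · rintro ⟨h1, h2⟩
      rw [Nat.mul_div_cancel _ hk1] at h2; omega
    · rintro ⟨h1, h2⟩
      have := (addMul_inj (a := i) (a' := m) (b := 0) (b' := 0) hk1 hk1 (by omega)).1
      omega
  have hgspec : m % 2 = 0 → g (m * (k - 1)) = f ((m - 1) * (k - 1)) := by
    intro hme
    rw [hg]; dsimp only
    rw [if_pos ⟨hme, rfl⟩]
  have hgint : ∀ i d, 1 ≤ d → d ≤ k - 2 → i ≤ m - 1 →
      g (i * (k - 1) + d) = f (i * (k - 1) + d) := by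
    intro i d hd1 hd2 hi
    have hlt : i * (k - 1) + d < m * (k - 1) := by
      have := mul_succ_le (c := k - 1) (show i < m by omega); omega
    have hsp := split_mod (i := i) (d := d) hk1 (by omega)
    rw [hg]; dsimp only
    rw [if_neg (by rintro ⟨h1, h2⟩; omega), if_neg (by rintro ⟨h1, h2⟩; omega)]
  -- injectivity of g
  have hginj : Set.InjOn g (Set.Iio (m * (k - 1) + 1)) := by
    intro p hp q hq hpq
    simp only [Set.mem_Iio] at hp hq
    have hdecomp : ∀ x, x ≤ m * (k - 1) → (k - 1) * (x / (k - 1)) + x % (k - 1) = x ∧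
        x % (k - 1) < k - 1 ∧ x / (k - 1) ≤ m := by
      intro x hx
      refine ⟨Nat.div_add_mod x (k - 1), Nat.mod_lt _ hk1, ?_⟩
      by_contra hcon
      have h2 := mul_succ_le (c := k - 1) (show m < x / (k - 1) by omega)
      have h3 := Nat.div_add_mod x (k - 1)
      have h4 : (k - 1) * (x / (k - 1)) = x / (k - 1) * (k - 1) := Nat.mul_comm _ _
      omega
    obtain ⟨hdp, hdp2, hdp3⟩ := hdecomp p (by omega)
    obtain ⟨hdq, hdq2, hdq3⟩ := hdecomp q (by omega)
    have hwidx : ∀ x, x ≤ m * (k - 1) → x % (k - 1) = 0 → x / (k - 1) % 2 = 1 →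
        (x / (k - 1) - 1) / 2 < (m + 1) / 2 := by
      intro x hx h1 h2
      have := (hdecomp x hx).2.2
      omega
    have hflt : ∀ x, x ≤ m * (k - 1) → ¬(m % 2 = 0 ∧ x = m * (k - 1)) →
        ¬(x % (k - 1) = 0 ∧ x / (k - 1) % 2 = 1) → x < r * (k - 1) := by
      intro x hx hA hB
      rcases Nat.lt_or_ge x (m * (k - 1)) with h | h
      · omega
      · exfalso
        have hxe : x = m * (k - 1) := by omega
        have h0 : x % (k - 1) = 0 := by rw [hxe]; exact Nat.mul_mod_left _ _
        have h1 : x / (k - 1) = m := by rw [hxe]; exact Nat.mul_div_cancel _ hk1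
        have hmo : ¬ (m % 2 = 0) := fun hc => hA ⟨hc, hxe⟩
        exact hB ⟨h0, by omega⟩
    rw [hg] at hpq; dsimp only at hpq
    by_cases h1p : m % 2 = 0 ∧ p = m * (k - 1) <;>
      by_cases h1q : m % 2 = 0 ∧ q = m * (k - 1)
    · omega
    · rw [if_pos h1p] at hpq
      by_cases h2q : q % (k - 1) = 0 ∧ q / (k - 1) % 2 = 1
      · rw [if_neg h1q, if_pos h2q] at hpq
        exact absurd hpq.symm (hwf _ (hwidx q (by omega) h2q.1 h2q.2) _ hfr1)
      · rw [if_neg h1q, if_neg h2q] at hpq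
        have hql := hflt q (by omega) h1q h2q
        have heq2 := hf (Set.mem_Iio.mpr hfr1) (Set.mem_Iio.mpr hql) hpq
        exfalso
        have hq0 : q % (k - 1) = 0 := by
          rw [← heq2]; exact Nat.mul_mod_left _ _
        have hq1 : q / (k - 1) = m - 1 := by
          rw [← heq2]; exact Nat.mul_div_cancel _ hk1
        exact h2q ⟨hq0, by obtain ⟨h1p1, h1p2⟩ := h1p; omega⟩
    · rw [if_pos h1q] at hpq
      by_cases h2p : p % (k - 1) = 0 ∧ p / (k - 1) % 2 = 1
      · rw [if_neg h1p, if_pos h2p] at hpq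
        exact absurd hpq (hwf _ (hwidx p (by omega) h2p.1 h2p.2) _ hfr1)
      · rw [if_neg h1p, if_neg h2p] at hpq
        have hpl := hflt p (by omega) h1p h2p
        have heq2 := hf (Set.mem_Iio.mpr hpl) (Set.mem_Iio.mpr hfr1) hpq
        exfalso
        have hp0 : p % (k - 1) = 0 := by
          rw [heq2]; exact Nat.mul_mod_left _ _
        have hp1 : p / (k - 1) = m - 1 := by
          rw [heq2]; exact Nat.mul_div_cancel _ hk1
        exact h2p ⟨hp0, by obtain ⟨h1q1, h1q2⟩ := h1q; omega⟩
    · rw [if_neg h1p, if_neg h1q] at hpq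
      by_cases h2p : p % (k - 1) = 0 ∧ p / (k - 1) % 2 = 1 <;>
        by_cases h2q : q % (k - 1) = 0 ∧ q / (k - 1) % 2 = 1
      · rw [if_pos h2p, if_pos h2q] at hpq
        have heq := hw (Set.mem_Iio.mpr (hwidx p (by omega) h2p.1 h2p.2))
          (Set.mem_Iio.mpr (hwidx q (by omega) h2q.1 h2q.2)) hpq
        obtain ⟨h2p1, h2p2⟩ := h2p
        obtain ⟨h2q1, h2q2⟩ := h2q
        have hdd : p / (k - 1) = q / (k - 1) := by
          generalize p / (k - 1) = ip at heq h2p2 ⊢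
          generalize q / (k - 1) = iq at heq h2q2 ⊢
          omega
        have h5 : (k - 1) * (p / (k - 1)) = (k - 1) * (q / (k - 1)) := by rw [hdd]
        omega
      · rw [if_pos h2p, if_neg h2q] at hpq
        have hql := hflt q (by omega) h1q h2q
        exact absurd hpq (hwf _ (hwidx p (by omega) h2p.1 h2p.2) _ hql)
      · rw [if_neg h2p, if_pos h2q] at hpq
        have hpl := hflt p (by omega) h1p h2p
        exact absurd hpq.symm (hwf _ (hwidx q (by omega) h2q.1 h2q.2) _ hpl)
      · rw [if_neg h2p, if_neg h2q] at hpq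
        exact hf (Set.mem_Iio.mpr (hflt p (by omega) h1p h2p))
          (Set.mem_Iio.mpr (hflt q (by omega) h1q h2q)) hpq
  by_cases H : ∃ i < m, col (pathEdge k g i) = b
  · -- a candidate has color b : extend the cycle to a b-path with r edges
    left
    obtain ⟨i, hi, hcb⟩ := H
    have hipos : ∀ j, j ≤ k - 1 → i * (k - 1) + j ≤ m * (k - 1) := by
      intro j hj
      have := mul_succ_le (c := k - 1) (show i < m by omega); omega
    have hhinj : ∀ a c, a < k → c < k →
        g (i * (k - 1) + a) = g (i * (k - 1) + c) → a = c := by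
      intro a c ha hc heq
      have := hginj (Set.mem_Iio.mpr (by have := hipos a (by omega); omega))
        (Set.mem_Iio.mpr (by have := hipos c (by omega); omega)) heq
      omega
    have hpe : pathEdge k g i = (range k).image (fun j => g (i * (k - 1) + j)) := rfl
    rcases Nat.even_or_odd i with hie | hio
    · -- even i : connector at the left end
      have hie' : i % 2 = 0 := Nat.even_iff.mp hie
      refine cand_left hk (by omega) hf hcol (show i < r by omega)
        (σ := fun j => g (i * (k - 1) + j)) ?_ ?_ ?_ ?_
      · intro a ha c hc heq
        exact hhinj a c (Set.mem_Iio.mp ha) (Set.mem_Iio.mp hc) heq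
      · show g (i * (k - 1) + 0) = f (i * (k - 1))
        rw [add_zero]; exact hgf0 i hie' (by omega)
      · intro j hj1 hj2
        rcases Nat.lt_or_ge j (k - 1) with hjk | hjk
        · left
          exact ⟨j, hj1, by omega, hgint i j hj1 (by omega) (by omega)⟩
        · right
          intro q hq
          have hj' : j = k - 1 := by omega
          have hpos : i * (k - 1) + (k - 1) = (i + 1) * (k - 1) := by
            rw [add_mul, one_mul]
          show g (i * (k - 1) + j) ≠ f q
          rw [hj', hpos, hgw (i + 1) (by omega) (by omega)]
          exact hwf ((i + 1 - 1) / 2) (by omega) q hq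
      · rw [← hpe]; exact hcb
    · have hio' : i % 2 = 1 := Nat.odd_iff.mp hio
      rcases Nat.lt_or_ge i (m - 1) with him | him
      · -- odd i, not last : connector at the right end
        refine cand_right hk (by omega) hf hcol (show i < r by omega)
          (σ := fun j => g (i * (k - 1) + j)) ?_ ?_ ?_ ?_
        · intro a ha c hc heq
          exact hhinj a c (Set.mem_Iio.mp ha) (Set.mem_Iio.mp hc) heq
        · show g (i * (k - 1) + (k - 1)) = f ((i + 1) * (k - 1) % (r * (k - 1)))
          have hpos : i * (k - 1) + (k - 1) = (i + 1) * (k - 1) := by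
            rw [add_mul, one_mul]
          rw [hpos, hgf0 (i + 1) (by omega) (by omega),
            Nat.mod_eq_of_lt (by have := mul_succ_le (c := k - 1) (show i + 1 < r by omega); omega)]
        · intro j hj
          rcases Nat.eq_zero_or_pos j with rfl | hj1
          · right
            intro q hq
            show g (i * (k - 1) + 0) ≠ f q
            rw [add_zero, hgw i hio' (by omega)]
            exact hwf ((i - 1) / 2) (by omega) q hq
          · left
            exact ⟨j, hj1, by omega, hgint i j hj1 (by omega) (by omega)⟩
        · rw [← hpe]; exact hcb
      · -- odd i = m - 1 (m even) : connector at the left end after a swap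
        have him' : i = m - 1 := by omega
        have hme : m % 2 = 0 := by omega
        refine cand_left hk (by omega) hf hcol (show i < r by omega)
          (σ := fun j => g (i * (k - 1) + Equiv.swap 0 (k - 1) j)) ?_ ?_ ?_ ?_
        · intro a ha c hc heq
          have := hhinj _ _ (swap_range_lt (by omega) (by omega) (Set.mem_Iio.mp ha))
            (swap_range_lt (by omega) (by omega) (Set.mem_Iio.mp hc)) heq
          exact (Equiv.swap 0 (k - 1)).injective this
        · show g (i * (k - 1) + Equiv.swap 0 (k - 1) 0) = f (i * (k - 1))
          rw [Equiv.swap_apply_left]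
          have hpos : i * (k - 1) + (k - 1) = m * (k - 1) := by
            rw [him', Nat.sub_mul, one_mul]; omega
          rw [hpos, hgspec hme, him']
        · intro j hj1 hj2
          rcases Nat.lt_or_ge j (k - 1) with hjk | hjk
          · left
            refine ⟨j, hj1, by omega, ?_⟩
            show g (i * (k - 1) + Equiv.swap 0 (k - 1) j) = f (i * (k - 1) + j)
            rw [Equiv.swap_apply_of_ne_of_ne (by omega) (by omega)]
            exact hgint i j hj1 (by omega) (by omega)
          · right
            intro q hq
            have hj' : j = k - 1 := by omega
            show g (i * (k - 1) + Equiv.swap 0 (k - 1) j) ≠ f q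
            rw [hj', Equiv.swap_apply_right, add_zero, hgw i hio' (by omega)]
            exact hwf ((i - 1) / 2) (by omega) q hq
        · rw [image_range_swap (a := 0) (b := k - 1)
            (fun j => g (i * (k - 1) + Equiv.swap 0 (k - 1) j))
            (fun j => g (i * (k - 1) + j)) (by omega) (by omega) (fun j => rfl), ← hpe]
          exact hcb
  · -- no candidate has color b : g is a (!b)-path with m edges
    right
    push_neg at H
    refine ⟨g, hginj, fun i hi => ?_⟩
    have := H i hi
    cases hcb : col (pathEdge k g i)
    · cases b
      · exact absurd hcb this
      · rfl
    · cases b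
      · rfl
      · exact absurd hcb this

end lemA

section lemB

variable {V : Type} [DecidableEq V]

lemma lemB_even {k r m : ℕ} (hk : 3 ≤ k) (hm : 3 ≤ m) (hmr : m ≤ r) (hme : m % 2 = 0)
    {col : Finset V → Bool} {b : Bool}
    {f : ℕ → V} (hf : Set.InjOn f (Set.Iio (r * (k - 1))))
    (hcol : ∀ i < r, col (cycleEdge k r f i) = b)
    {w : ℕ → V} (hw : Set.InjOn w (Set.Iio ((m + 1) / 2)))
    (hwf : ∀ j < (m + 1) / 2, ∀ q < r * (k - 1), w j ≠ f q) :
    hasPath k r col b ∨ hasCycle k m col (!b) := by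
  have hkk : 2 ≤ k - 1 := by omega
  have hk1 : 0 < k - 1 := by omega
  have hMm : m * (k - 1) ≤ r * (k - 1) := Nat.mul_le_mul_right _ hmr
  have hM3 : 3 * (k - 1) ≤ m * (k - 1) := Nat.mul_le_mul_right _ hm
  set g : ℕ → V := fun p =>
    if p % (k - 1) = 0 then
      (if p / (k - 1) % 2 = 1 then f p else w (p / (k - 1) / 2))
    else f p with hg
  have hgc : ∀ i, i % 2 = 1 → g (i * (k - 1)) = f (i * (k - 1)) := by
    intro i hi
    rw [hg]; dsimp only
    rw [if_pos (Nat.mul_mod_left _ _), if_pos (by rw [Nat.mul_div_cancel _ hk1]; exact hi)]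
  have hgw : ∀ i, i % 2 = 0 → g (i * (k - 1)) = w (i / 2) := by
    intro i hi
    rw [hg]; dsimp only
    rw [if_pos (Nat.mul_mod_left _ _),
      if_neg (by rw [Nat.mul_div_cancel _ hk1]; omega), Nat.mul_div_cancel _ hk1]
  have hgint : ∀ i d, 1 ≤ d → d ≤ k - 2 → g (i * (k - 1) + d) = f (i * (k - 1) + d) := by
    intro i d hd1 hd2
    have hsp := split_mod (i := i) (d := d) hk1 (by omega)
    rw [hg]; dsimp only
    rw [if_neg (by omega)]
  have hdiv : ∀ x, x < m * (k - 1) → x / (k - 1) ≤ m - 1 := by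
    intro x hx
    by_contra hcon
    have h2 := mul_succ_le (c := k - 1) (show m - 1 < x / (k - 1) by omega)
    have h3 := Nat.div_add_mod x (k - 1)
    have h4 : (k - 1) * (x / (k - 1)) = x / (k - 1) * (k - 1) := Nat.mul_comm _ _
    have h5 : (m - 1) * (k - 1) + (k - 1) = m * (k - 1) := by
      have := mul_succ_le (c := k - 1) (show m - 1 < m by omega)
      have h6 : m - 1 + 1 = m := by omega
      calc (m - 1) * (k - 1) + (k - 1) = (m - 1 + 1) * (k - 1) := by rw [add_mul, one_mul]
        _ = m * (k - 1) := by rw [h6]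
    omega
  have hval : ∀ p, p < m * (k - 1) →
      (∃ i, i % 2 = 0 ∧ i ≤ m - 1 ∧ p = i * (k - 1) ∧ g p = w (i / 2)) ∨ g p = f p := by
    intro p hp
    have hdp := Nat.div_add_mod p (k - 1)
    by_cases hd0 : p % (k - 1) = 0
    · by_cases hodd : p / (k - 1) % 2 = 1
      · right
        rw [hg]; dsimp only
        rw [if_pos hd0, if_pos hodd]
      · left
        have hcm : (k - 1) * (p / (k - 1)) = (p / (k - 1)) * (k - 1) := Nat.mul_comm _ _
        refine ⟨p / (k - 1), by omega, hdiv p hp, by omega, ?_⟩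
        rw [hg]; dsimp only
        rw [if_pos hd0, if_neg hodd]
    · right
      rw [hg]; dsimp only
      rw [if_neg hd0]
  have hginj : Set.InjOn g (Set.Iio (m * (k - 1))) := by
    intro p hp q hq hpq
    simp only [Set.mem_Iio] at hp hq
    rcases hval p hp with ⟨i, hi1, hi2, hi3, hi4⟩ | hfp <;>
      rcases hval q hq with ⟨i', hi1', hi2', hi3', hi4'⟩ | hfq
    · rw [hi4, hi4'] at hpq
      have := hw (Set.mem_Iio.mpr (by omega)) (Set.mem_Iio.mpr (by omega)) hpq
      have hii : i = i' := by omega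
      rw [hi3, hi3', hii]
    · rw [hi4, hfq] at hpq
      exact absurd hpq (hwf _ (by omega) _ (by omega))
    · rw [hfp, hi4'] at hpq
      exact absurd hpq.symm (hwf _ (by omega) _ (by omega))
    · rw [hfp, hfq] at hpq
      exact hf (Set.mem_Iio.mpr (by omega)) (Set.mem_Iio.mpr (by omega)) hpq
  have hσinj : ∀ i, Set.InjOn (fun j => g ((i * (k - 1) + j) % (m * (k - 1)))) (Set.Iio k) := by
    intro i a ha c hc heq
    simp only [Set.mem_Iio] at ha hc
    have h1 := hginj (Set.mem_Iio.mpr (Nat.mod_lt _ (show 0 < m * (k - 1) by omega)))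
      (Set.mem_Iio.mpr (Nat.mod_lt _ (show 0 < m * (k - 1) by omega))) heq
    have h2 : a % (m * (k - 1)) = c % (m * (k - 1)) :=
      Nat.ModEq.add_left_cancel' (i * (k - 1)) h1
    rw [Nat.mod_eq_of_lt (by omega), Nat.mod_eq_of_lt (by omega)] at h2
    exact h2
  have hposlt : ∀ i j, i ≤ m - 1 → j ≤ k - 1 → i * (k - 1) + j ≤ m * (k - 1) := by
    intro i j hi hj
    have := mul_succ_le (c := k - 1) (show i < m by omega)
    omega
  by_cases H : ∃ i < m, col (cycleEdge k m g i) = b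
  · left
    obtain ⟨i, hi, hcb⟩ := H
    have hpe : cycleEdge k m g i
        = (range k).image (fun j => g ((i * (k - 1) + j) % (m * (k - 1)))) := rfl
    rcases Nat.even_or_odd i with hie | hio
    · -- even i : CAND-right at edge i
      have hie' : i % 2 = 0 := Nat.even_iff.mp hie
      have hi2 : i + 1 ≤ m - 1 := by omega
      refine cand_right hk (by omega) hf hcol (show i < r by omega)
        (σ := fun j => g ((i * (k - 1) + j) % (m * (k - 1)))) (hσinj i) ?_ ?_ ?_
      · show g ((i * (k - 1) + (k - 1)) % (m * (k - 1))) = f ((i + 1) * (k - 1) % (r * (k - 1)))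
        have hpos : i * (k - 1) + (k - 1) = (i + 1) * (k - 1) := by rw [add_mul, one_mul]
        have hlt : (i + 1) * (k - 1) < m * (k - 1) := by
          have := mul_succ_le (c := k - 1) (show i + 1 < m by omega); omega
        rw [hpos, Nat.mod_eq_of_lt hlt, hgc (i + 1) (by omega),
          Nat.mod_eq_of_lt (by omega)]
      · intro j hj
        rcases Nat.eq_zero_or_pos j with rfl | hj1
        · right
          intro q hq
          show g ((i * (k - 1) + 0) % (m * (k - 1))) ≠ f q
          have hlt : i * (k - 1) + 0 < m * (k - 1) := by
            have := mul_succ_le (c := k - 1) (show i < m by omega); omega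
          rw [Nat.mod_eq_of_lt hlt, add_zero, hgw i hie']
          exact hwf (i / 2) (by omega) q hq
        · left
          refine ⟨j, hj1, by omega, ?_⟩
          show g ((i * (k - 1) + j) % (m * (k - 1))) = f (i * (k - 1) + j)
          have hlt : i * (k - 1) + j < m * (k - 1) := by
            have := mul_succ_le (c := k - 1) (show i < m by omega); omega
          rw [Nat.mod_eq_of_lt hlt, hgint i j hj1 (by omega)]
      · rw [← hpe]; exact hcb
    · -- odd i : CAND-left at edge i
      have hio' : i % 2 = 1 := Nat.odd_iff.mp hio
      refine cand_left hk (by omega) hf hcol (show i < r by omega)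
        (σ := fun j => g ((i * (k - 1) + j) % (m * (k - 1)))) (hσinj i) ?_ ?_ ?_
      · show g ((i * (k - 1) + 0) % (m * (k - 1))) = f (i * (k - 1))
        have hlt : i * (k - 1) + 0 < m * (k - 1) := by
          have := hposlt i 0 (by omega) (by omega)
          have h2 : i * (k - 1) ≠ m * (k - 1) := by
            intro hcon
            have := (addMul_inj (a := i) (a' := m) (b := 0) (b' := 0) hk1 hk1 (by omega)).1
            omega
          omega
        rw [Nat.mod_eq_of_lt hlt, add_zero, hgc i hio']
      · intro j hj1 hj2
        rcases Nat.lt_or_ge j (k - 1) with hjk | hjk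
        · left
          refine ⟨j, hj1, by omega, ?_⟩
          show g ((i * (k - 1) + j) % (m * (k - 1))) = f (i * (k - 1) + j)
          have hlt : i * (k - 1) + j < m * (k - 1) := by
            have := mul_succ_le (c := k - 1) (show i < m by omega); omega
          rw [Nat.mod_eq_of_lt hlt, hgint i j hj1 (by omega)]
        · right
          intro q hq
          have hj' : j = k - 1 := by omega
          show g ((i * (k - 1) + j) % (m * (k - 1))) ≠ f q
          have hpos : i * (k - 1) + j = (i + 1) * (k - 1) := by
            rw [add_mul, one_mul]; omega
          rcases Nat.lt_or_ge (i + 1) m with him | him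
          · have hlt : (i + 1) * (k - 1) < m * (k - 1) := by
              have := mul_succ_le (c := k - 1) him; omega
            rw [hpos, Nat.mod_eq_of_lt hlt, hgw (i + 1) (by omega)]
            exact hwf ((i + 1) / 2) (by omega) q hq
          · have him' : i + 1 = m := by omega
            rw [hpos, him', Nat.mod_self]
            have h0 : g 0 = w 0 := by
              have := hgw 0 (by omega)
              rw [zero_mul] at this
              rw [this]
            rw [h0]
            exact hwf 0 (by omega) q hq
      · rw [← hpe]; exact hcb
  · right
    push_neg at H
    refine ⟨g, hginj, fun i hi => ?_⟩
    have := H i hi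
    cases hcb : col (cycleEdge k m g i)
    · cases b
      · exact absurd hcb this
      · rfl
    · cases b
      · rfl
      · exact absurd hcb this

end lemB

section lemBodd

variable {V : Type} [DecidableEq V]

lemma lemB_odd {k r m : ℕ} (hk : 3 ≤ k) (hm : 3 ≤ m) (hmr : m ≤ r) (hmo : m % 2 = 1)
    {col : Finset V → Bool} {b : Bool}
    {f : ℕ → V} (hf : Set.InjOn f (Set.Iio (r * (k - 1))))
    (hcol : ∀ i < r, col (cycleEdge k r f i) = b)
    {w : ℕ → V} (hw : Set.InjOn w (Set.Iio ((m + 1) / 2)))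
    (hwf : ∀ j < (m + 1) / 2, ∀ q < r * (k - 1), w j ≠ f q) :
    hasPath k r col b ∨ hasCycle k m col (!b) := by
  have hkk : 2 ≤ k - 1 := by omega
  have hk1 : 0 < k - 1 := by omega
  have hMm : m * (k - 1) ≤ r * (k - 1) := Nat.mul_le_mul_right _ hmr
  have hM3 : 3 * (k - 1) ≤ m * (k - 1) := Nat.mul_le_mul_right _ hm
  set g : ℕ → V := fun p =>
    if p % (k - 1) = 0 then
      (if p / (k - 1) = 0 then w ((m + 1) / 2 - 1)
       else if p / (k - 1) % 2 = 1 then w ((p / (k - 1) - 1) / 2)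
       else f p)
    else if p / (k - 1) = 0 then (if p % (k - 1) = k - 2 then f (k - 1) else f p)
    else f p with hg
  have hgw0 : g 0 = w ((m + 1) / 2 - 1) := by
    rw [hg]; dsimp only
    rw [if_pos (Nat.zero_mod _), if_pos (by rw [Nat.zero_div])]
  have hgwodd : ∀ i, i % 2 = 1 → g (i * (k - 1)) = w ((i - 1) / 2) := by
    intro i hi
    rw [hg]; dsimp only
    rw [if_pos (Nat.mul_mod_left _ _), if_neg (by rw [Nat.mul_div_cancel _ hk1]; omega),
      if_pos (by rw [Nat.mul_div_cancel _ hk1]; exact hi), Nat.mul_div_cancel _ hk1]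
  have hgceven : ∀ i, i % 2 = 0 → 1 ≤ i → g (i * (k - 1)) = f (i * (k - 1)) := by
    intro i hi hi1
    rw [hg]; dsimp only
    rw [if_pos (Nat.mul_mod_left _ _), if_neg (by rw [Nat.mul_div_cancel _ hk1]; omega),
      if_neg (by rw [Nat.mul_div_cancel _ hk1]; omega)]
  have hgint1 : ∀ i d, 1 ≤ i → 1 ≤ d → d ≤ k - 2 →
      g (i * (k - 1) + d) = f (i * (k - 1) + d) := by
    intro i d hi hd1 hd2
    have hsp := split_mod (i := i) (d := d) hk1 (by omega)
    rw [hg]; dsimp only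
    rw [if_neg (by omega), if_neg (by omega)]
  have hgi0a : ∀ d, 1 ≤ d → d ≤ k - 3 → g d = f d := by
    intro d hd1 hd2
    rw [hg]; dsimp only
    rw [if_neg (by rw [Nat.mod_eq_of_lt (by omega)]; omega),
      if_pos (by rw [Nat.div_eq_of_lt (by omega)]),
      if_neg (by rw [Nat.mod_eq_of_lt (by omega)]; omega)]
  have hgi0b : g (k - 2) = f (k - 1) := by
    rw [hg]; dsimp only
    rw [if_neg (by rw [Nat.mod_eq_of_lt (by omega)]; omega),
      if_pos (by rw [Nat.div_eq_of_lt (by omega)]),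
      if_pos (by rw [Nat.mod_eq_of_lt (by omega)])]
  have hdiv : ∀ x, x < m * (k - 1) → x / (k - 1) ≤ m - 1 := by
    intro x hx
    by_contra hcon
    have h2 := mul_succ_le (c := k - 1) (show m - 1 < x / (k - 1) by omega)
    have h3 := Nat.div_add_mod x (k - 1)
    have h4 : (k - 1) * (x / (k - 1)) = x / (k - 1) * (k - 1) := Nat.mul_comm _ _
    have h6 : m - 1 + 1 = m := by omega
    have h5 : (m - 1) * (k - 1) + (k - 1) = m * (k - 1) := by
      calc (m - 1) * (k - 1) + (k - 1) = (m - 1 + 1) * (k - 1) := by rw [add_mul, one_mul]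
        _ = m * (k - 1) := by rw [h6]
    omega
  have hval : ∀ p, p < m * (k - 1) →
      (p = 0 ∧ g p = w ((m + 1) / 2 - 1)) ∨
      (∃ i, i % 2 = 1 ∧ 1 ≤ i ∧ i ≤ m - 2 ∧ p = i * (k - 1) ∧ g p = w ((i - 1) / 2)) ∨
      (p = k - 2 ∧ g p = f (k - 1)) ∨
      (p ≠ k - 1 ∧ g p = f p) := by
    intro p hp
    have hdp := Nat.div_add_mod p (k - 1)
    have hcm : (k - 1) * (p / (k - 1)) = (p / (k - 1)) * (k - 1) := Nat.mul_comm _ _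
    by_cases hd0 : p % (k - 1) = 0
    · by_cases hi0 : p / (k - 1) = 0
      · left
        have hz : (k - 1) * (p / (k - 1)) = 0 := by rw [hi0, Nat.mul_zero]
        have hp0 : p = 0 := by omega
        subst hp0
        exact ⟨rfl, hgw0⟩
      · by_cases hiodd : p / (k - 1) % 2 = 1
        · right; left
          have hdm := hdiv p hp
          generalize hieq : p / (k - 1) = i at hiodd hi0 hdm hdp hcm
          have hpi : p = i * (k - 1) := by omega
          refine ⟨i, hiodd, by omega, by omega, hpi, ?_⟩
          rw [hpi, hgwodd i hiodd]
        · right; right; right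
          constructor
          · intro hcon
            rw [hcon, Nat.div_self (by omega)] at hiodd
            omega
          · rw [hg]; dsimp only
            rw [if_pos hd0, if_neg hi0, if_neg hiodd]
    · by_cases hi0 : p / (k - 1) = 0
      · have hz : (k - 1) * (p / (k - 1)) = 0 := by rw [hi0, Nat.mul_zero]
        have hplt : p < k - 1 := by
          have := Nat.mod_lt p hk1; omega
        by_cases hd2 : p % (k - 1) = k - 2
        · right; right; left
          have hp2 : p = k - 2 := by omega
          subst hp2
          exact ⟨rfl, hgi0b⟩
        · right; right; right
          refine ⟨by omega, ?_⟩
          rw [hg]; dsimp only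
          rw [if_neg hd0, if_pos hi0, if_neg hd2]
      · right; right; right
        have h5 : (k - 1) * 1 ≤ (k - 1) * (p / (k - 1)) :=
          Nat.mul_le_mul_left _ (Nat.one_le_iff_ne_zero.mpr hi0)
        have h6 : (k - 1) * 1 = k - 1 := Nat.mul_one _
        refine ⟨by omega, ?_⟩
        rw [hg]; dsimp only
        rw [if_neg hd0, if_neg hi0]
  have hk1r : k - 1 < r * (k - 1) := by omega
  have hginj : Set.InjOn g (Set.Iio (m * (k - 1))) := by
    intro p hp q hq hpq
    simp only [Set.mem_Iio] at hp hq
    have ht2 : 2 ≤ (m + 1) / 2 := by omega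
    rcases hval p hp with ⟨hp1, hp2⟩ | ⟨i, hi1, hi2, hi3, hi4, hi5⟩ | ⟨hp1, hp2⟩ | ⟨hp1, hp2⟩ <;>
      rcases hval q hq with ⟨hq1, hq2⟩ | ⟨i', hi1', hi2', hi3', hi4', hi5'⟩ | ⟨hq1, hq2⟩ |
        ⟨hq1, hq2⟩
    · omega
    · rw [hp2, hi5'] at hpq
      have := hw (Set.mem_Iio.mpr (by omega)) (Set.mem_Iio.mpr (by omega)) hpq
      omega
    · rw [hp2, hq2] at hpq
      exact absurd hpq (hwf _ (by omega) _ hk1r)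
    · rw [hp2, hq2] at hpq
      exact absurd hpq (hwf _ (by omega) _ (by omega))
    · rw [hq2, hi5] at hpq
      have := hw (Set.mem_Iio.mpr (by omega)) (Set.mem_Iio.mpr (by omega)) hpq.symm
      omega
    · rw [hi5, hi5'] at hpq
      have := hw (Set.mem_Iio.mpr (by omega)) (Set.mem_Iio.mpr (by omega)) hpq
      have hii : i = i' := by omega
      rw [hi4, hi4', hii]
    · rw [hi5, hq2] at hpq
      exact absurd hpq (hwf _ (by omega) _ hk1r)
    · rw [hi5, hq2] at hpq
      exact absurd hpq (hwf _ (by omega) _ (by omega))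
    · rw [hp2, hq2] at hpq
      exact absurd hpq.symm (hwf _ (by omega) _ hk1r)
    · rw [hp2, hi5'] at hpq
      exact absurd hpq.symm (hwf _ (by omega) _ hk1r)
    · omega
    · rw [hp2, hq2] at hpq
      have := hf (Set.mem_Iio.mpr hk1r) (Set.mem_Iio.mpr (by omega)) hpq
      omega
    · rw [hp2, hq2] at hpq
      exact absurd hpq.symm (hwf _ (by omega) _ (by omega))
    · rw [hp2, hi5'] at hpq
      exact absurd hpq.symm (hwf _ (by omega) _ (by omega))
    · rw [hp2, hq2] at hpq
      have := hf (Set.mem_Iio.mpr (by omega)) (Set.mem_Iio.mpr hk1r) hpq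
      omega
    · rw [hp2, hq2] at hpq
      exact hf (Set.mem_Iio.mpr (by omega)) (Set.mem_Iio.mpr (by omega)) hpq
  have hMpos : 0 < m * (k - 1) := by omega
  have hσinj : ∀ i, Set.InjOn (fun j => g ((i * (k - 1) + j) % (m * (k - 1)))) (Set.Iio k) := by
    intro i a ha c hc heq
    simp only [Set.mem_Iio] at ha hc
    have h1 := hginj (Set.mem_Iio.mpr (Nat.mod_lt _ hMpos))
      (Set.mem_Iio.mpr (Nat.mod_lt _ hMpos)) heq
    have h2 : a % (m * (k - 1)) = c % (m * (k - 1)) :=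
      Nat.ModEq.add_left_cancel' (i * (k - 1)) h1
    rw [Nat.mod_eq_of_lt (by omega), Nat.mod_eq_of_lt (by omega)] at h2
    exact h2
  by_cases H : ∃ i < m, col (cycleEdge k m g i) = b
  · left
    obtain ⟨i, hi, hcb⟩ := H
    have hpe : cycleEdge k m g i
        = (range k).image (fun j => g ((i * (k - 1) + j) % (m * (k - 1)))) := rfl
    have hstrict : ∀ j, j < k - 1 → i * (k - 1) + j < m * (k - 1) := by
      intro j hj
      have := mul_succ_le (c := k - 1) (show i < m by omega); omega
    rcases Nat.eq_zero_or_pos i with rfl | hi1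
    · -- edge 0 : swap positions (k-2) and (k-1)
      refine cand_right hk (by omega) hf hcol (show 0 < r by omega)
        (σ := fun j => g ((0 * (k - 1) + Equiv.swap (k - 2) (k - 1) j) % (m * (k - 1))))
        ?_ ?_ ?_ ?_
      · intro a ha c hc heq
        have := hσinj 0 (Set.mem_Iio.mpr (swap_range_lt (by omega) (by omega)
          (Set.mem_Iio.mp ha))) (Set.mem_Iio.mpr (swap_range_lt (by omega) (by omega)
          (Set.mem_Iio.mp hc))) heq
        exact (Equiv.swap (k - 2) (k - 1)).injective this
      · show g ((0 * (k - 1) + Equiv.swap (k - 2) (k - 1) (k - 1)) % (m * (k - 1)))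
          = f ((0 + 1) * (k - 1) % (r * (k - 1)))
        rw [Equiv.swap_apply_right, zero_mul, zero_add,
          Nat.mod_eq_of_lt (show k - 2 < m * (k - 1) by omega), hgi0b,
          Nat.mod_eq_of_lt (by rw [zero_add, one_mul]; omega), zero_add, one_mul]
      · intro j hj
        rcases Nat.eq_zero_or_pos j with rfl | hj1
        · right
          intro q hq
          show g ((0 * (k - 1) + Equiv.swap (k - 2) (k - 1) 0) % (m * (k - 1))) ≠ f q
          rw [Equiv.swap_apply_of_ne_of_ne (by omega) (by omega), zero_mul, zero_add,
            Nat.mod_eq_of_lt (by omega), hgw0]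
          exact hwf ((m + 1) / 2 - 1) (by omega) q hq
        · rcases Nat.lt_or_ge j (k - 2) with hjk | hjk
          · left
            refine ⟨j, hj1, by omega, ?_⟩
            show g ((0 * (k - 1) + Equiv.swap (k - 2) (k - 1) j) % (m * (k - 1)))
              = f (0 * (k - 1) + j)
            rw [Equiv.swap_apply_of_ne_of_ne (by omega) (by omega), zero_mul, zero_add,
              Nat.mod_eq_of_lt (by omega), hgi0a j hj1 (by omega)]
          · right
            intro q hq
            have hj2 : j = k - 2 := by omega
            show g ((0 * (k - 1) + Equiv.swap (k - 2) (k - 1) j) % (m * (k - 1))) ≠ f q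
            rw [hj2, Equiv.swap_apply_left, zero_mul, zero_add,
              Nat.mod_eq_of_lt (by omega),
              show (k - 1 : ℕ) = 1 * (k - 1) by rw [one_mul], hgwodd 1 (by omega)]
            exact hwf ((1 - 1) / 2) (by omega) q hq
      · rw [image_range_swap (a := k - 2) (b := k - 1)
          (fun j => g ((0 * (k - 1) + Equiv.swap (k - 2) (k - 1) j) % (m * (k - 1))))
          (fun j => g ((0 * (k - 1) + j) % (m * (k - 1)))) (by omega) (by omega)
          (fun j => rfl), ← hpe]
        exact hcb
    · rcases Nat.even_or_odd i with hie | hio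
      · -- even i ≥ 2 : CAND-left
        have hie' : i % 2 = 0 := Nat.even_iff.mp hie
        refine cand_left hk (by omega) hf hcol (show i < r by omega) (hσinj i) ?_ ?_ ?_
        · show g ((i * (k - 1) + 0) % (m * (k - 1))) = f (i * (k - 1))
          rw [Nat.mod_eq_of_lt (by have := hstrict 0 (by omega); omega), add_zero,
            hgceven i hie' hi1]
        · intro j hj1 hj2
          rcases Nat.lt_or_ge j (k - 1) with hjk | hjk
          · left
            refine ⟨j, hj1, by omega, ?_⟩
            show g ((i * (k - 1) + j) % (m * (k - 1))) = f (i * (k - 1) + j)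
            rw [Nat.mod_eq_of_lt (hstrict j hjk), hgint1 i j hi1 hj1 (by omega)]
          · right
            intro q hq
            have hj' : j = k - 1 := by omega
            show g ((i * (k - 1) + j) % (m * (k - 1))) ≠ f q
            have hpos : i * (k - 1) + j = (i + 1) * (k - 1) := by
              rw [add_mul, one_mul]; omega
            rcases Nat.lt_or_ge (i + 1) m with him | him
            · have hlt : (i + 1) * (k - 1) < m * (k - 1) := by
                have := mul_succ_le (c := k - 1) him; omega
              rw [hpos, Nat.mod_eq_of_lt hlt, hgwodd (i + 1) (by omega)]
              exact hwf ((i + 1 - 1) / 2) (by omega) q hq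
            · have him' : i + 1 = m := by omega
              rw [hpos, him', Nat.mod_self, hgw0]
              exact hwf ((m + 1) / 2 - 1) (by omega) q hq
        · rw [← hpe]; exact hcb
      · -- odd i : CAND-right
        have hio' : i % 2 = 1 := Nat.odd_iff.mp hio
        have him2 : i ≤ m - 2 := by omega
        refine cand_right hk (by omega) hf hcol (show i < r by omega) (hσinj i) ?_ ?_ ?_
        · show g ((i * (k - 1) + (k - 1)) % (m * (k - 1))) = f ((i + 1) * (k - 1) % (r * (k - 1)))
          have hpos : i * (k - 1) + (k - 1) = (i + 1) * (k - 1) := by rw [add_mul, one_mul]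
          have hlt : (i + 1) * (k - 1) < m * (k - 1) := by
            have := mul_succ_le (c := k - 1) (show i + 1 < m by omega); omega
          rw [hpos, Nat.mod_eq_of_lt hlt, hgceven (i + 1) (by omega) (by omega),
            Nat.mod_eq_of_lt (by omega)]
        · intro j hj
          rcases Nat.eq_zero_or_pos j with rfl | hj1
          · right
            intro q hq
            show g ((i * (k - 1) + 0) % (m * (k - 1))) ≠ f q
            rw [Nat.mod_eq_of_lt (by have := hstrict 0 (by omega); omega), add_zero,
              hgwodd i hio']
            exact hwf ((i - 1) / 2) (by omega) q hq
          · left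
            refine ⟨j, hj1, by omega, ?_⟩
            show g ((i * (k - 1) + j) % (m * (k - 1))) = f (i * (k - 1) + j)
            rw [Nat.mod_eq_of_lt (hstrict j (by omega)), hgint1 i j hi1 hj1 (by omega)]
        · rw [← hpe]; exact hcb
  · right
    push_neg at H
    refine ⟨g, hginj, fun i hi => ?_⟩
    have := H i hi
    cases hcb : col (cycleEdge k m g i)
    · cases b
      · exact absurd hcb this
      · rfl
    · cases b
      · rfl
      · exact absurd hcb this

lemma lemB {k r m : ℕ} (hk : 3 ≤ k) (hm : 3 ≤ m) (hmr : m ≤ r)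
    {col : Finset V → Bool} {b : Bool}
    {f : ℕ → V} (hf : Set.InjOn f (Set.Iio (r * (k - 1))))
    (hcol : ∀ i < r, col (cycleEdge k r f i) = b)
    {w : ℕ → V} (hw : Set.InjOn w (Set.Iio ((m + 1) / 2)))
    (hwf : ∀ j < (m + 1) / 2, ∀ q < r * (k - 1), w j ≠ f q) :
    hasPath k r col b ∨ hasCycle k m col (!b) := by
  rcases Nat.even_or_odd m with hme | hmo
  · exact lemB_even hk hm hmr (Nat.even_iff.mp hme) hf hcol hw hwf
  · exact lemB_odd hk hm hmr (Nat.odd_iff.mp hmo) hf hcol hw hwf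

end lemBodd

section lower

/-- The extremal coloring : a set is red iff it stays inside the first `n*(k-1)` vertices. -/
def col0 (k n X : ℕ) : Finset (Fin X) → Bool :=
  fun s => decide (∀ v ∈ s, (v : ℕ) < n * (k - 1))

lemma bad_no_redpath {k n X : ℕ} (hk : 3 ≤ k) (hn : 1 ≤ n) :
    ¬ hasPath k n (col0 k n X) true := by
  rintro ⟨f, hf, hcol⟩
  have hk1 : 0 < k - 1 := by omega
  have hedge : ∀ i < n, ∀ v ∈ pathEdge k f i, (v : ℕ) < n * (k - 1) := by
    intro i hi v hv
    have := hcol i hi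
    rw [col0, decide_eq_true_eq] at this
    exact this v hv
  have hall : ∀ p, p ≤ n * (k - 1) → (f p : ℕ) < n * (k - 1) := by
    intro p hp
    obtain ⟨i, j, hi, hj, hij⟩ : ∃ i j, i < n ∧ j < k ∧ p = i * (k - 1) + j := by
      rcases Nat.lt_or_ge p (n * (k - 1)) with h | h
      · refine ⟨p / (k - 1), p % (k - 1), ?_, by have := Nat.mod_lt p hk1; omega, ?_⟩
        · by_contra hcon
          have h2 := mul_succ_le (c := k - 1) (show n - 1 < p / (k - 1) by omega)
          have h3 := Nat.div_add_mod p (k - 1)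
          have h4 : (k - 1) * (p / (k - 1)) = p / (k - 1) * (k - 1) := Nat.mul_comm _ _
          have h5 : (n - 1) * (k - 1) + (k - 1) = n * (k - 1) := by
            have h6 : n - 1 + 1 = n := by omega
            calc (n - 1) * (k - 1) + (k - 1) = (n - 1 + 1) * (k - 1) := by
                  rw [add_mul, one_mul]
              _ = n * (k - 1) := by rw [h6]
          omega
        · have h3 := Nat.div_add_mod p (k - 1)
          have h4 : (k - 1) * (p / (k - 1)) = p / (k - 1) * (k - 1) := Nat.mul_comm _ _
          omega
      · refine ⟨n - 1, k - 1, by omega, by omega, ?_⟩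
        have h5 : (n - 1) * (k - 1) + (k - 1) = n * (k - 1) := by
          have h6 : n - 1 + 1 = n := by omega
          calc (n - 1) * (k - 1) + (k - 1) = (n - 1 + 1) * (k - 1) := by
                rw [add_mul, one_mul]
            _ = n * (k - 1) := by rw [h6]
        omega
    have hmem : f p ∈ pathEdge k f i := by
      rw [pathEdge]
      exact Finset.mem_image.mpr ⟨j, Finset.mem_range.mpr hj, by rw [← hij]⟩
    exact hedge i hi _ hmem
  have hcard : (Finset.range (n * (k - 1) + 1)).image f ⊆
      Finset.univ.filter (fun v => (v : ℕ) < n * (k - 1)) := by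
    intro v hv
    obtain ⟨p, hp, rfl⟩ := Finset.mem_image.mp hv
    simp only [Finset.mem_range] at hp
    exact Finset.mem_filter.mpr ⟨Finset.mem_univ _, hall p (by omega)⟩
  have h1 : (Finset.range (n * (k - 1) + 1)).card
      = ((Finset.range (n * (k - 1) + 1)).image f).card := by
    rw [Finset.card_image_of_injOn (by rw [Finset.coe_range]; exact hf)]
  have h2 : (Finset.univ.filter (fun v : Fin X => (v : ℕ) < n * (k - 1))).card
      ≤ n * (k - 1) := by
    have hmaps : ∀ a ∈ Finset.univ.filter (fun v : Fin X => (v : ℕ) < n * (k - 1)),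
        (a : ℕ) ∈ Finset.range (n * (k - 1)) :=
      fun a ha => Finset.mem_range.mpr (Finset.mem_filter.mp ha).2
    have := Finset.card_le_card_of_injOn _ hmaps (fun a _ b _ h => Fin.val_injective h)
    rwa [Finset.card_range] at this
  have h3 := Finset.card_le_card hcard
  rw [Finset.card_range] at h1
  omega

lemma card_high {k n X : ℕ} :
    (Finset.univ.filter (fun v : Fin X => n * (k - 1) ≤ (v : ℕ))).card ≤ X - n * (k - 1) := by
  have hmaps : ∀ a ∈ Finset.univ.filter (fun v : Fin X => n * (k - 1) ≤ (v : ℕ)),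
      (a : ℕ) - n * (k - 1) ∈ Finset.range (X - n * (k - 1)) := by
    intro a ha
    simp only [Finset.mem_filter] at ha
    have := a.isLt
    exact Finset.mem_range.mpr (by omega)
  have hinj : Set.InjOn (fun v : Fin X => (v : ℕ) - n * (k - 1))
      ↑(Finset.univ.filter (fun v : Fin X => n * (k - 1) ≤ (v : ℕ))) := by
    intro a ha b hb h
    simp only [Finset.coe_filter, Set.mem_setOf_eq] at ha hb
    simp only at h
    have : (a : ℕ) = (b : ℕ) := by omega
    exact Fin.val_injective this
  have := Finset.card_le_card_of_injOn _ hmaps hinj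
  rwa [Finset.card_range] at this

lemma bad_no_bluepath {k n m X : ℕ} (hk : 3 ≤ k) (hm : 3 ≤ m) (hmn : m ≤ n)
    (hX : X + 1 ≤ n * (k - 1) + (m + 1) / 2) :
    ¬ hasPath k m (col0 k n X) false := by
  rintro ⟨f, hf, hcol⟩
  have hk1 : 0 < k - 1 := by omega
  have h1 : ∀ i, ∃ p, i < m → (p < m * (k - 1) + 1 ∧ (∃ j, j < k ∧ p = i * (k - 1) + j) ∧
      n * (k - 1) ≤ (f p : ℕ)) := by
    intro i
    by_cases hi : i < m
    · have := hcol i hi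
      rw [col0, decide_eq_false_iff_not] at this
      push_neg at this
      obtain ⟨v, hv, hv2⟩ := this
      rw [pathEdge] at hv
      obtain ⟨j, hj, rfl⟩ := Finset.mem_image.mp hv
      simp only [Finset.mem_range] at hj
      refine ⟨i * (k - 1) + j, fun _ => ⟨?_, ⟨j, hj, rfl⟩, by omega⟩⟩
      have := mul_succ_le (c := k - 1) (show i < m by omega)
      omega
    · exact ⟨0, fun h => absurd h hi⟩
  choose P hP using h1
  have hfib : ∀ b ∈ (Finset.range m).image (fun i => f (P i)),
      ((Finset.range m).filter (fun i => f (P i) = b)).card ≤ 2 := by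
    intro b hb
    obtain ⟨i₀, hi₀, hb₀⟩ := Finset.mem_image.mp hb
    simp only [Finset.mem_range] at hi₀
    set p := P i₀ with hpdef
    have hsub : (Finset.range m).filter (fun i => f (P i) = b)
        ⊆ {p / (k - 1) - 1, p / (k - 1)} := by
      intro i hi
      simp only [Finset.mem_filter, Finset.mem_range] at hi
      obtain ⟨him, hieq⟩ := hi
      have hPi := hP i him
      have hPi₀ := hP i₀ hi₀
      have hpp : P i = p := by
        apply hf (Set.mem_Iio.mpr hPi.1) (Set.mem_Iio.mpr hPi₀.1)
        rw [hieq, ← hb₀]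
      obtain ⟨j, hj, hij⟩ := hPi.2.1
      rw [hpp] at hij
      simp only [Finset.mem_insert, Finset.mem_singleton]
      rcases Nat.lt_or_ge j (k - 1) with hjk | hjk
      · right
        have := (split_mod (i := i) (d := j) hk1 hjk).2
        rw [← hij] at this
        omega
      · left
        have hj' : j = k - 1 := by omega
        have hpos : p = (i + 1) * (k - 1) := by rw [hij, hj', add_mul, one_mul]
        have : p / (k - 1) = i + 1 := by rw [hpos]; exact Nat.mul_div_cancel _ hk1
        omega
    calc ((Finset.range m).filter (fun i => f (P i) = b)).card
        ≤ ({p / (k - 1) - 1, p / (k - 1)} : Finset ℕ).card := Finset.card_le_card hsub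
      _ ≤ 2 := by
          apply (Finset.card_insert_le _ _).trans
          simp
  have hcount := Finset.card_le_mul_card_image (f := fun i => f (P i))
    (Finset.range m) 2 hfib
  rw [Finset.card_range] at hcount
  have hsub2 : (Finset.range m).image (fun i => f (P i))
      ⊆ Finset.univ.filter (fun v : Fin X => n * (k - 1) ≤ (v : ℕ)) := by
    intro v hv
    obtain ⟨i, hi, rfl⟩ := Finset.mem_image.mp hv
    simp only [Finset.mem_range] at hi
    exact Finset.mem_filter.mpr ⟨Finset.mem_univ _, (hP i hi).2.2⟩
  have h4 := (Finset.card_le_card hsub2).trans (card_high (k := k) (n := n))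
  omega

lemma bad_no_bluecycle {k n m X : ℕ} (hk : 3 ≤ k) (hm : 3 ≤ m) (hmn : m ≤ n)
    (hX : X + 1 ≤ n * (k - 1) + (m + 1) / 2) :
    ¬ hasCycle k m (col0 k n X) false := by
  rintro ⟨f, hf, hcol⟩
  have hk1 : 0 < k - 1 := by omega
  have hMpos : 0 < m * (k - 1) := by
    have := Nat.mul_le_mul_right (k - 1) hm; omega
  have h1 : ∀ i, ∃ p, i < m → (p < m * (k - 1) ∧ (∃ j, j < k ∧ (i * (k - 1) + j) % (m * (k - 1)) = p) ∧
      n * (k - 1) ≤ (f p : ℕ)) := by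
    intro i
    by_cases hi : i < m
    · have := hcol i hi
      rw [col0, decide_eq_false_iff_not] at this
      push_neg at this
      obtain ⟨v, hv, hv2⟩ := this
      rw [cycleEdge] at hv
      obtain ⟨j, hj, rfl⟩ := Finset.mem_image.mp hv
      simp only [Finset.mem_range] at hj
      exact ⟨(i * (k - 1) + j) % (m * (k - 1)), fun _ =>
        ⟨Nat.mod_lt _ hMpos, ⟨j, hj, rfl⟩, by omega⟩⟩
    · exact ⟨0, fun h => absurd h hi⟩
  choose P hP using h1
  have hxle : ∀ i j, i < m → j < k → i * (k - 1) + j ≤ m * (k - 1) := by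
    intro i j hi hj
    have := mul_succ_le (c := k - 1) hi
    omega
  have hfib : ∀ b ∈ (Finset.range m).image (fun i => f (P i)),
      ((Finset.range m).filter (fun i => f (P i) = b)).card ≤ 2 := by
    intro b hb
    obtain ⟨i₀, hi₀, hb₀⟩ := Finset.mem_image.mp hb
    simp only [Finset.mem_range] at hi₀
    set p := P i₀ with hpdef
    have key : ∀ i, i < m → f (P i) = b → ∃ j, j < k ∧ (i * (k - 1) + j) % (m * (k - 1)) = p := by
      intro i him hieq
      have hPi := hP i him
      have hPi₀ := hP i₀ hi₀
      have hpp : P i = p := by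
        apply hf (Set.mem_Iio.mpr hPi.1) (Set.mem_Iio.mpr hPi₀.1)
        rw [hieq, ← hb₀]
      obtain ⟨j, hj, hij⟩ := hPi.2.1
      exact ⟨j, hj, by rw [hij, hpp]⟩
    by_cases hp0 : p = 0
    · have hsub : (Finset.range m).filter (fun i => f (P i) = b) ⊆ {0, m - 1} := by
        intro i hi
        simp only [Finset.mem_filter, Finset.mem_range] at hi
        obtain ⟨j, hj, hij⟩ := key i hi.1 hi.2
        simp only [Finset.mem_insert, Finset.mem_singleton]
        rw [hp0] at hij
        rcases Nat.lt_or_ge (i * (k - 1) + j) (m * (k - 1)) with hx | hx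
        · rw [Nat.mod_eq_of_lt hx] at hij
          left
          by_contra hcon
          have h5 : 1 * (k - 1) ≤ i * (k - 1) := Nat.mul_le_mul_right _ (by omega)
          omega
        · have hxe : i * (k - 1) + j = m * (k - 1) := by
            have := hxle i j hi.1 hj; omega
          right
          rcases Nat.lt_or_ge j (k - 1) with hjk | hjk
          · have := (split_mod (i := i) (d := j) hk1 hjk).2
            have h6 : (m * (k - 1)) / (k - 1) = m := Nat.mul_div_cancel _ hk1
            rw [hxe, h6] at this
            omega
          · have hj' : j = k - 1 := by omega
            have hpos : (i + 1) * (k - 1) = m * (k - 1) := by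
              rw [add_mul, one_mul]; omega
            have := (addMul_inj (a := i + 1) (a' := m) (b := 0) (b' := 0) hk1 hk1
              (by omega)).1
            omega
      calc _ ≤ ({0, m - 1} : Finset ℕ).card := Finset.card_le_card hsub
        _ ≤ 2 := by
            apply (Finset.card_insert_le _ _).trans
            simp
    · have hsub : (Finset.range m).filter (fun i => f (P i) = b)
          ⊆ {p / (k - 1) - 1, p / (k - 1)} := by
        intro i hi
        simp only [Finset.mem_filter, Finset.mem_range] at hi
        obtain ⟨j, hj, hij⟩ := key i hi.1 hi.2
        simp only [Finset.mem_insert, Finset.mem_singleton]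
        have hxlt : i * (k - 1) + j < m * (k - 1) := by
          rcases Nat.lt_or_ge (i * (k - 1) + j) (m * (k - 1)) with hx | hx
          · exact hx
          · exfalso
            have hxe : i * (k - 1) + j = m * (k - 1) := by
              have := hxle i j hi.1 hj; omega
            rw [hxe, Nat.mod_self] at hij
            exact hp0 hij.symm
        rw [Nat.mod_eq_of_lt hxlt] at hij
        rcases Nat.lt_or_ge j (k - 1) with hjk | hjk
        · right
          have := (split_mod (i := i) (d := j) hk1 hjk).2
          rw [hij] at this
          omega
        · left
          have hj' : j = k - 1 := by omega
          have hpos : p = (i + 1) * (k - 1) := by rw [← hij, hj', add_mul, one_mul]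
          have : p / (k - 1) = i + 1 := by rw [hpos]; exact Nat.mul_div_cancel _ hk1
          omega
      calc _ ≤ ({p / (k - 1) - 1, p / (k - 1)} : Finset ℕ).card := Finset.card_le_card hsub
        _ ≤ 2 := by
            apply (Finset.card_insert_le _ _).trans
            simp
  have hcount := Finset.card_le_mul_card_image (f := fun i => f (P i))
    (Finset.range m) 2 hfib
  rw [Finset.card_range] at hcount
  have hsub2 : (Finset.range m).image (fun i => f (P i))
      ⊆ Finset.univ.filter (fun v : Fin X => n * (k - 1) ≤ (v : ℕ)) := by
    intro v hv
    obtain ⟨i, hi, rfl⟩ := Finset.mem_image.mp hv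
    simp only [Finset.mem_range] at hi
    exact Finset.mem_filter.mpr ⟨Finset.mem_univ _, (hP i hi).2.2⟩
  have h4 := (Finset.card_le_card hsub2).trans (card_high (k := k) (n := n))
  omega

end lower

section assembly

/-- Restriction of a coloring along `Fin.castLE`. -/
def colRestrict {X Y : ℕ} (h : X ≤ Y) (col : Finset (Fin Y) → Bool) :
    Finset (Fin X) → Bool :=
  fun s => col (s.image (Fin.castLE h))

lemma transfer_path {k n X Y : ℕ} (h : X ≤ Y) {col : Finset (Fin Y) → Bool} {b : Bool}
    (hp : hasPath k n (colRestrict h col) b) : hasPath k n col b :=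
  hasPath_map (Fin.castLE h) (Fin.castLE_injective h) col b hp

lemma transfer_cycle {k n X Y : ℕ} (h : X ≤ Y) {col : Finset (Fin Y) → Bool} {b : Bool}
    (hp : hasCycle k n (colRestrict h col) b) : hasCycle k n col b :=
  hasCycle_map (Fin.castLE h) (Fin.castLE_injective h) col b hp

lemma up_PP {k n m X Y : ℕ} (hXY : X ≤ Y)
    (h : ∀ col : Finset (Fin X) → Bool, hasPath k n col true ∨ hasPath k m col false) :
    ∀ col : Finset (Fin Y) → Bool, hasPath k n col true ∨ hasPath k m col false := by
  intro col
  rcases h (colRestrict hXY col) with h1 | h1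
  · exact Or.inl (transfer_path hXY h1)
  · exact Or.inr (transfer_path hXY h1)

lemma up_PC {k n m X Y : ℕ} (hXY : X ≤ Y)
    (h : ∀ col : Finset (Fin X) → Bool, hasPath k n col true ∨ hasCycle k m col false) :
    ∀ col : Finset (Fin Y) → Bool, hasPath k n col true ∨ hasCycle k m col false := by
  intro col
  rcases h (colRestrict hXY col) with h1 | h1
  · exact Or.inl (transfer_path hXY h1)
  · exact Or.inr (transfer_cycle hXY h1)

lemma exists_fresh {X : ℕ} (O : Finset (Fin X)) (t : ℕ) (ht : t ≤ O.card) (hX : 0 < X) :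
    ∃ w : ℕ → Fin X, Set.InjOn w (Set.Iio t) ∧ ∀ j < t, w j ∈ O := by
  set e := O.orderIsoOfFin rfl with he
  refine ⟨fun j => if h : j < O.card then (e ⟨j, h⟩ : Fin X) else ⟨0, hX⟩, ?_, ?_⟩
  · intro a ha b hb heq
    simp only [Set.mem_Iio] at ha hb
    dsimp only at heq
    rw [dif_pos (show a < O.card by omega), dif_pos (show b < O.card by omega)] at heq
    have h1 : (e ⟨a, by omega⟩ : O) = e ⟨b, by omega⟩ := Subtype.ext heq
    have h2 := e.injective h1
    exact congrArg Fin.val h2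
  · intro j hj
    dsimp only
    rw [dif_pos (show j < O.card by omega)]
    exact (e ⟨j, by omega⟩).2

lemma ramsey_eq_of {S : Set ℕ} {c : ℕ} (hmem : c ∈ S) (hlow : ∀ x ∈ S, c ≤ x) :
    sInf S = c :=
  le_antisymm (Nat.sInf_le hmem) (hlow _ (Nat.sInf_mem ⟨c, hmem⟩))

/-- From statement (ii), the claimed value of `R(C_n, C_m)` is a Ramsey witness. -/
lemma ccmem {k n m : ℕ} (hk : 3 ≤ k) (hm : 3 ≤ m) (hmn : m ≤ n)
    (hcc : ramseyCC k n m = (k - 1) * n + (m - 1) / 2) :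
    ∀ col : Finset (Fin ((k - 1) * n + (m - 1) / 2)) → Bool,
      hasCycle k n col true ∨ hasCycle k m col false := by
  have hpos : 0 < (k - 1) * n + (m - 1) / 2 := by
    have h1 : 2 * 3 ≤ (k - 1) * n := Nat.mul_le_mul (by omega) (by omega)
    omega
  have hne : {N | ∀ col : Finset (Fin N) → Bool,
      hasCycle k n col true ∨ hasCycle k m col false}.Nonempty := by
    by_contra hcon
    rw [Set.not_nonempty_iff_eq_empty] at hcon
    have h0 : ramseyCC k n m = 0 := by rw [ramseyCC, hcon, Nat.sInf_empty]
    omega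
  have h2 := Nat.sInf_mem hne
  rw [show sInf {N | ∀ col : Finset (Fin N) → Bool,
      hasCycle k n col true ∨ hasCycle k m col false} = ramseyCC k n m from rfl, hcc] at h2
  exact h2

/-- Fresh vertices outside the image of an embedded cycle. -/
lemma fresh_for_cycle {k r X : ℕ} (f : ℕ → Fin X) (hf : Set.InjOn f (Set.Iio (r * (k - 1))))
    (t : ℕ) (ht : r * (k - 1) + t ≤ X) (hX : 0 < X) :
    ∃ w : ℕ → Fin X, Set.InjOn w (Set.Iio t) ∧
      ∀ j < t, ∀ q < r * (k - 1), w j ≠ f q := by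
  set O : Finset (Fin X) := Finset.univ \ (Finset.range (r * (k - 1))).image f with hO
  have hcard : O.card = X - r * (k - 1) := by
    rw [hO, Finset.card_sdiff_of_subset (Finset.subset_univ _),
      Finset.card_image_of_injOn (by rw [Finset.coe_range]; exact hf),
      Finset.card_range, Finset.card_univ, Fintype.card_fin]
  obtain ⟨w, hw1, hw2⟩ := exists_fresh O t (by omega) hX
  refine ⟨w, hw1, fun j hj q hq heq => ?_⟩
  have h1 := hw2 j hj
  rw [hO, Finset.mem_sdiff] at h1
  exact h1.2 (Finset.mem_image.mpr ⟨q, Finset.mem_range.mpr hq, heq.symm⟩)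

lemma memPC {k n m : ℕ} (hk : 3 ≤ k) (hm : 3 ≤ m) (hmn : m ≤ n)
    (hcc : ramseyCC k n m = (k - 1) * n + (m - 1) / 2) :
    ∀ col : Finset (Fin ((k - 1) * n + (m + 1) / 2)) → Bool,
      hasPath k n col true ∨ hasCycle k m col false := by
  set N := (k - 1) * n + (m + 1) / 2 with hN
  intro col
  by_contra hcon
  push_neg at hcon
  obtain ⟨hA, hB⟩ := hcon
  have hvN : (k - 1) * n + (m - 1) / 2 ≤ N := by omega
  have hcm : (k - 1) * n = n * (k - 1) := Nat.mul_comm _ _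
  rcases ccmem hk hm hmn hcc (colRestrict hvN col) with h1 | h1
  · obtain ⟨f, hf, hcol⟩ := transfer_cycle hvN h1
    obtain ⟨w, hw, hwf⟩ := fresh_for_cycle f hf ((m + 1) / 2) (by omega) (by omega)
    rcases lemB hk hm hmn hf hcol hw hwf with h2 | h2
    · exact hA h2
    · exact hB (by simpa using h2)
  · exact hB (transfer_cycle hvN h1)

lemma memPP {k n m : ℕ} (hk : 3 ≤ k) (hm : 3 ≤ m) (hmn : m ≤ n)
    (hii : ∀ m', 3 ≤ m' → m' ≤ n → ramseyCC k n m' = (k - 1) * n + (m' - 1) / 2) :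
    ∀ col : Finset (Fin ((k - 1) * n + (m + 1) / 2)) → Bool,
      hasPath k n col true ∨ hasPath k m col false := by
  set N := (k - 1) * n + (m + 1) / 2 with hN
  intro col
  by_contra hcon
  push_neg at hcon
  obtain ⟨hA, hB⟩ := hcon
  have hcm : (k - 1) * n = n * (k - 1) := Nat.mul_comm _ _
  rcases Nat.lt_or_ge m n with hlt | hge
  · -- m < n : use R(C_n, C_{m+1})
    have hvN : (k - 1) * n + (m + 1 - 1) / 2 ≤ N := by omega
    rcases ccmem hk (by omega) (by omega) (hii (m + 1) (by omega) (by omega))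
        (colRestrict hvN col) with h1 | h1
    · obtain ⟨f, hf, hcol⟩ := transfer_cycle hvN h1
      obtain ⟨w, hw, hwf⟩ := fresh_for_cycle f hf ((m + 1) / 2) (by omega) (by omega)
      rcases lemA hk hm hmn hf hcol hw hwf with h2 | h2
      · exact hA h2
      · exact hB (by simpa using h2)
    · exact hB (hasCycle_succ_path hk (transfer_cycle hvN h1))
  · -- m = n
    have hmn' : m = n := by omega
    have hvN : (k - 1) * n + (m - 1) / 2 ≤ N := by omega
    rcases ccmem hk hm hmn (hii m hm hmn) (colRestrict hvN col) with h1 | h1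
    · obtain ⟨f, hf, hcol⟩ := transfer_cycle hvN h1
      obtain ⟨w, hw, hwf⟩ := fresh_for_cycle f hf ((m + 1) / 2) (by omega) (by omega)
      rcases lemA hk hm hmn hf hcol hw hwf with h2 | h2
      · exact hA h2
      · exact hB (by simpa using h2)
    · obtain ⟨f, hf, hcol⟩ := transfer_cycle hvN h1
      obtain ⟨w, hw, hwf⟩ := fresh_for_cycle f hf ((m + 1) / 2)
        (by
          have h3 : m * (k - 1) ≤ n * (k - 1) := Nat.mul_le_mul_right _ hmn
          omega)
        (by omega)
      rcases lemA hk hm (le_refl m) hf hcol hw hwf with h2 | h2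
      · exact hB h2
      · exact hA (hmn' ▸ (by simpa using h2))
  -- (end)

lemma lowPP {k n m : ℕ} (hk : 3 ≤ k) (hm : 3 ≤ m) (hmn : m ≤ n) :
    ∀ x ∈ {N | ∀ col : Finset (Fin N) → Bool,
        hasPath k n col true ∨ hasPath k m col false},
      (k - 1) * n + (m + 1) / 2 ≤ x := by
  intro x hx
  by_contra hcon
  have hcm : (k - 1) * n = n * (k - 1) := Nat.mul_comm _ _
  set X := (k - 1) * n + (m + 1) / 2 - 1 with hX
  have h1 := up_PP (show x ≤ X by omega) hx (col0 k n X)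
  rcases h1 with h1 | h1
  · exact bad_no_redpath hk (by omega) h1
  · exact bad_no_bluepath hk hm hmn (by omega) h1

lemma lowPC {k n m : ℕ} (hk : 3 ≤ k) (hm : 3 ≤ m) (hmn : m ≤ n) :
    ∀ x ∈ {N | ∀ col : Finset (Fin N) → Bool,
        hasPath k n col true ∨ hasCycle k m col false},
      (k - 1) * n + (m + 1) / 2 ≤ x := by
  intro x hx
  by_contra hcon
  have hcm : (k - 1) * n = n * (k - 1) := Nat.mul_comm _ _
  set X := (k - 1) * n + (m + 1) / 2 - 1 with hX
  have h1 := up_PC (show x ≤ X by omega) hx (col0 k n X)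
  rcases h1 with h1 | h1
  · exact bad_no_redpath hk (by omega) h1
  · exact bad_no_bluecycle hk hm hmn (by omega) h1

end assembly

theorem conjectures_equivalent :
    (∀ k n m : ℕ, 3 ≤ k → 3 ≤ m → m ≤ n →
        ramseyPP k n m = (k - 1) * n + (m + 1) / 2 ∧
        ramseyPC k n m = (k - 1) * n + (m + 1) / 2 ∧
        ramseyCC k n m + 1 = (k - 1) * n + (m + 1) / 2) ↔
    (∀ k n m : ℕ, 3 ≤ k → 3 ≤ m → m ≤ n →
        ramseyCC k n m = (k - 1) * n + (m - 1) / 2) := by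
  constructor
  · intro h k n m hk hm hmn
    obtain ⟨_, _, h3⟩ := h k n m hk hm hmn
    omega
  · intro h k n m hk hm hmn
    have hcc := h k n m hk hm hmn
    have hii : ∀ m', 3 ≤ m' → m' ≤ n → ramseyCC k n m' = (k - 1) * n + (m' - 1) / 2 :=
      fun m' h3 hle => h k n m' hk h3 hle
    refine ⟨?_, ?_, by omega⟩
    · exact ramsey_eq_of (memPP hk hm hmn hii) (lowPP hk hm hmn)
    · exact ramsey_eq_of (memPC hk hm hmn hcc) (lowPC hk hm hmn)
end cand
end
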